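/- arXiv:1003.1059 — 3 statements merged into one kernel-verified Lean document; each statement's English description precedes it below -/
import Mathlib

section
/- Let c : ℝ^N×[0,T] → ℝ be Borel measurable, bounded, and log-Lipschitz in space: |c(x,t)−c(y,t)| ≤ C|x−y|(1+|log|x−y||) for all x,y ∈ ℝ^N, t ∈ [0,T], for some constant C>0. Then for any measurable control b : [0,T] → ℝ^N with |b(s)| ≤ 1 a.e. and any x₀ ∈ ℝ^N, the equation x'(s) = c(x(s),s) b(s) for a.e. s ∈ [0,T], x(0) = x₀ (understood in integral form, x(t) = x₀ + ∫₀ᵗ c(x(s),s) b(s) ds) has a unique absolutely continuous solution on [0,T]. Moreover there exists a modulus of continuity ω̃ (depending only on the constant C and T, with ω̃(0⁺)=0) such that if x and y are two solutions associated with the same control b, then |x(t)−y(t)| ≤ ω̃(|x(0)−y(0)|) for all t ∈ [0,T]. -/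
open MeasureTheory Set Metric Filter

noncomputable section

set_option maxHeartbeats 1000000

def phi (C r : ℝ) : ℝ := C * r * (1 + |Real.log r|)

lemma phi_nonneg {C r : ℝ} (hC : 0 ≤ C) (hr : 0 ≤ r) : 0 ≤ phi C r := by
  unfold phi; positivity

lemma phi_zero (C : ℝ) : phi C 0 = 0 := by simp [phi]

lemma aux_hd1 (x : ℝ) : HasDerivAt (fun u : ℝ => (1+u)*Real.exp u)
    (1 * Real.exp x + (1+x) * Real.exp x) x :=
  ((hasDerivAt_id x).const_add 1).mul (Real.hasDerivAt_exp x)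

lemma aux_hd2 (x : ℝ) : HasDerivAt (fun u : ℝ => (1+u)*Real.exp (-u))
    (1 * Real.exp (-x) + (1+x) * (Real.exp (-x) * (-1))) x :=
  ((hasDerivAt_id x).const_add 1).mul ((Real.hasDerivAt_exp (-x)).comp x (hasDerivAt_neg x))

lemma aux_mono_exp : MonotoneOn (fun u : ℝ => (1+u)*Real.exp u) (Ici (0:ℝ)) := by
  apply monotoneOn_of_deriv_nonneg (convex_Ici 0)
  · exact (Continuous.mul (by continuity) Real.continuous_exp).continuousOn
  · exact fun x _ => (aux_hd1 x).differentiableAt.differentiableWithinAt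
  · intro x hx
    rw [interior_Ici] at hx
    rw [(aux_hd1 x).deriv]
    have : 0 < Real.exp x := Real.exp_pos x
    nlinarith [le_of_lt (Set.mem_Ioi.mp hx)]

lemma aux_anti_exp : AntitoneOn (fun u : ℝ => (1+u)*Real.exp (-u)) (Ici (0:ℝ)) := by
  apply antitoneOn_of_deriv_nonpos (convex_Ici 0)
  · exact (Continuous.mul (by continuity) (Real.continuous_exp.comp continuous_neg)).continuousOn
  · exact fun x _ => (aux_hd2 x).differentiableAt.differentiableWithinAt
  · intro x hx
    rw [interior_Ici] at hx
    rw [(aux_hd2 x).deriv]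
    have : 0 < Real.exp (-x) := Real.exp_pos _
    nlinarith [le_of_lt (Set.mem_Ioi.mp hx)]

lemma phi_expr {C r : ℝ} (hr : 0 < r) (hr1 : r ≤ 1) :
    phi C r = C * ((1 + (-Real.log r)) * Real.exp (-(-Real.log r))) := by
  have h1 : |Real.log r| = -Real.log r := abs_of_nonpos (Real.log_nonpos hr.le hr1)
  rw [phi, h1, neg_neg, Real.exp_log hr]; ring

lemma phi_expr' {C r : ℝ} (hr1 : 1 ≤ r) :
    phi C r = C * ((1 + Real.log r) * Real.exp (Real.log r)) := by
  have hr : (0:ℝ) < r := lt_of_lt_of_le one_pos hr1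
  have h1 : |Real.log r| = Real.log r := abs_of_nonneg (Real.log_nonneg hr1)
  rw [phi, h1, Real.exp_log hr]; ring

lemma phi_mono {C : ℝ} (hC : 0 ≤ C) : MonotoneOn (phi C) (Ici (0:ℝ)) := by
  have key1 : ∀ r s : ℝ, 0 < r → r ≤ s → s ≤ 1 → phi C r ≤ phi C s := by
    intro r s hr hrs hs1
    have hs : (0:ℝ) < s := lt_of_lt_of_le hr hrs
    rw [phi_expr hr (hrs.trans hs1), phi_expr hs hs1]
    have h1 : -Real.log s ∈ Ici (0:ℝ) := by
      simp only [mem_Ici]; linarith [Real.log_nonpos hs.le hs1]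
    have h2 : -Real.log r ∈ Ici (0:ℝ) := by
      simp only [mem_Ici]; linarith [Real.log_nonpos hr.le (hrs.trans hs1)]
    have h3 : -Real.log s ≤ -Real.log r := by
      have := Real.log_le_log hr hrs; linarith
    exact mul_le_mul_of_nonneg_left (aux_anti_exp h1 h2 h3) hC
  have key2 : ∀ r s : ℝ, 1 ≤ r → r ≤ s → phi C r ≤ phi C s := by
    intro r s hr hrs
    rw [phi_expr' hr, phi_expr' (hr.trans hrs)]
    have h1 : Real.log r ∈ Ici (0:ℝ) := Real.log_nonneg hr
    have h2 : Real.log s ∈ Ici (0:ℝ) := Real.log_nonneg (hr.trans hrs)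
    have h3 : Real.log r ≤ Real.log s :=
      Real.log_le_log (lt_of_lt_of_le one_pos hr) hrs
    exact mul_le_mul_of_nonneg_left (aux_mono_exp h1 h2 h3) hC
  intro r hr s hs hrs
  rcases eq_or_lt_of_le (α := ℝ) hr with h0 | h0
  · rw [← h0, phi_zero]; exact phi_nonneg hC hs
  rcases le_total s 1 with hs1 | hs1
  · exact key1 r s h0 hrs hs1
  rcases le_total r 1 with hr1 | hr1
  · calc phi C r ≤ phi C 1 := key1 r 1 h0 hr1 le_rfl
    _ ≤ phi C s := key2 1 s le_rfl hs1
  · exact key2 r s hr1 hrs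

lemma mul_abs_log_le {r : ℝ} (hr : 0 ≤ r) (hr1 : r ≤ 1) :
    r * |Real.log r| ≤ 2 * Real.sqrt r := by
  rcases eq_or_lt_of_le hr with h0 | h0
  · simp [← h0]
  have h1 : |Real.log r| = Real.log r⁻¹ := by
    rw [Real.log_inv, abs_of_nonpos (Real.log_nonpos h0.le hr1)]
  have h2 : Real.log r⁻¹ = 2 * Real.log (Real.sqrt r⁻¹) := by
    rw [Real.log_sqrt (by positivity)]; ring
  have h3 : Real.log (Real.sqrt r⁻¹) ≤ Real.sqrt r⁻¹ - 1 :=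
    Real.log_le_sub_one_of_pos (Real.sqrt_pos.2 (by positivity))
  have h4 : Real.sqrt r⁻¹ = (Real.sqrt r)⁻¹ := Real.sqrt_inv r
  have h5 : 0 < Real.sqrt r := Real.sqrt_pos.2 h0
  have h6 : r * (Real.sqrt r)⁻¹ = Real.sqrt r := by
    rw [← Real.mul_self_sqrt hr]
    field_simp
    rw [Real.sqrt_sq h5.le]
  rw [h1, h2]
  calc r * (2 * Real.log (Real.sqrt r⁻¹)) ≤ r * (2 * (Real.sqrt r)⁻¹) := by
        apply mul_le_mul_of_nonneg_left _ hr
        rw [h4] at h3 ⊢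
        nlinarith
    _ = 2 * Real.sqrt r := by rw [mul_comm 2 (Real.sqrt r)⁻¹, ← mul_assoc, h6]; ring

lemma phi_le_sqrt {C r : ℝ} (hC : 0 ≤ C) (hr : 0 ≤ r) (hr1 : r ≤ 1) :
    phi C r ≤ C * (r + 2 * Real.sqrt r) := by
  have := mul_abs_log_le hr hr1
  have : r * (1 + |Real.log r|) ≤ r + 2 * Real.sqrt r := by nlinarith [abs_nonneg (Real.log r)]
  calc phi C r = C * (r * (1 + |Real.log r|)) := by rw [phi]; ring
    _ ≤ C * (r + 2 * Real.sqrt r) := mul_le_mul_of_nonneg_left this hC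

lemma phi_measurable (C : ℝ) : Measurable (phi C) := by
  apply Measurable.mul
  · exact (measurable_const.mul measurable_id)
  · exact (measurable_const.add (Real.measurable_log.abs))

lemma phi_le_phi_two {C r : ℝ} (hC : 0 ≤ C) (hr : 0 ≤ r) : phi C r ≤ phi (2*C) r := by
  unfold phi
  nlinarith [mul_nonneg (mul_nonneg hC hr)
    (by linarith [abs_nonneg (Real.log r)] : (0:ℝ) ≤ 1 + |Real.log r|)]


lemma II_of_bdd {E : Type*} [NormedAddCommGroup E] {f : ℝ → E} {a b B : ℝ} (hab : a ≤ b)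
    (hm : AEStronglyMeasurable f (volume.restrict (Ioc a b)))
    (hb : ∀ᵐ s ∂(volume.restrict (Ioc a b)), ‖f s‖ ≤ B) :
    IntervalIntegrable f volume a b := by
  rw [intervalIntegrable_iff_integrableOn_Ioc_of_le hab]
  exact Integrable.mono' (integrable_const B) hm hb

lemma comp_II {g f : ℝ → ℝ} {T t₀ : ℝ} (hg : Measurable g)
    (hmono : MonotoneOn g (Ici 0)) (hf : ContinuousOn f (Icc 0 T))
    (hnn : ∀ t ∈ Icc (0:ℝ) T, 0 ≤ f t) (ht₀ : t₀ ∈ Icc (0:ℝ) T) :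
    IntervalIntegrable (fun s => g (f s)) volume 0 t₀ := by
  obtain ⟨B, hB⟩ := isCompact_Icc.exists_bound_of_continuousOn hf
  have hBnn : (0:ℝ) ≤ B := le_trans (norm_nonneg _) (hB 0 (by constructor <;> [rfl; exact ht₀.1.trans ht₀.2]))
  have hsub : Ioc (0:ℝ) t₀ ⊆ Icc 0 T := fun s hs => ⟨hs.1.le, hs.2.trans ht₀.2⟩
  have hmm : AEMeasurable f (volume.restrict (Ioc 0 t₀)) :=
    (hf.aemeasurable measurableSet_Icc).mono_measure (Measure.restrict_mono hsub le_rfl)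
  apply II_of_bdd (B := max |g 0| |g B|) ht₀.1
  · exact (hg.comp_aemeasurable hmm).aestronglyMeasurable
  · filter_upwards [ae_restrict_mem measurableSet_Ioc] with s hs
    have hsI : s ∈ Icc (0:ℝ) T := hsub hs
    have h1 : 0 ≤ f s := hnn s hsI
    have h2 : f s ≤ B := le_trans (le_abs_self _) (hB s hsI)
    have h3 : g 0 ≤ g (f s) := hmono (le_refl (0:ℝ)) h1 h1
    have h4 : g (f s) ≤ g B := hmono h1 (h1.trans h2) h2
    rw [Real.norm_eq_abs, abs_le]
    constructor
    · calc -(max |g 0| |g B|) ≤ -|g 0| := by simp [le_max_left]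
        _ ≤ g 0 := neg_abs_le _
        _ ≤ g (f s) := h3
    · calc g (f s) ≤ g B := h4
        _ ≤ |g B| := le_abs_self _
        _ ≤ max |g 0| |g B| := le_max_right _ _

/-- Osgood-type comparison: a subsolution with strictly smaller initial value stays
below a supersolution. -/
lemma comparison {T a a' : ℝ} (g f ρ : ℝ → ℝ)
    (hg_meas : Measurable g) (hg_mono : MonotoneOn g (Ici 0))
    (hf_cont : ContinuousOn f (Icc 0 T)) (hf_nonneg : ∀ t ∈ Icc (0:ℝ) T, 0 ≤ f t)
    (hρ_cont : ContinuousOn ρ (Icc 0 T)) (hρ_nonneg : ∀ t ∈ Icc (0:ℝ) T, 0 ≤ ρ t)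
    (hf : ∀ t ∈ Icc (0:ℝ) T, f t ≤ a + ∫ s in (0:ℝ)..t, g (f s))
    (hρ : ∀ t ∈ Icc (0:ℝ) T, a' + (∫ s in (0:ℝ)..t, g (ρ s)) ≤ ρ t)
    (haa' : a < a') :
    ∀ t ∈ Icc (0:ℝ) T, f t < ρ t := by
  by_contra hcon
  push_neg at hcon
  obtain ⟨t₁, ht₁, ht₁'⟩ := hcon
  set S : Set ℝ := Icc 0 T ∩ (fun t => f t - ρ t) ⁻¹' (Ici 0) with hS
  have hSne : S.Nonempty := ⟨t₁, ht₁, by simp [mem_Ici]; linarith⟩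
  have hScl : IsClosed S :=
    ContinuousOn.preimage_isClosed_of_isClosed (hf_cont.sub hρ_cont) isClosed_Icc isClosed_Ici
  have hSbdd : BddBelow S := ⟨0, fun x hx => hx.1.1⟩
  set t₀ := sInf S with ht₀def
  have ht₀S : t₀ ∈ S := hScl.csInf_mem hSne hSbdd
  have ht₀I : t₀ ∈ Icc (0:ℝ) T := ht₀S.1
  have ht₀ge : ρ t₀ ≤ f t₀ := by have := ht₀S.2; simp [mem_Ici] at this; linarith
  have h0T : (0:ℝ) ∈ Icc (0:ℝ) T := ⟨le_rfl, ht₀I.1.trans ht₀I.2⟩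
  have h0notS : (0:ℝ) ∉ S := by
    intro h0
    have h1 := hf 0 h0T
    have h2 := hρ 0 h0T
    simp only [intervalIntegral.integral_same] at h1 h2
    have := h0.2
    simp only [mem_preimage, mem_Ici, sub_nonneg] at this
    linarith
  have ht₀pos : 0 < t₀ := lt_of_le_of_ne ht₀I.1 (fun h => h0notS (h ▸ ht₀S))
  have hbefore : ∀ s, 0 ≤ s → s < t₀ → f s < ρ s := by
    intro s hs0 hst
    have hsI : s ∈ Icc (0:ℝ) T := ⟨hs0, hst.le.trans ht₀I.2⟩
    by_contra hc
    push_neg at hc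
    have : s ∈ S := ⟨hsI, by simp [mem_Ici]; linarith⟩
    exact absurd (csInf_le hSbdd this) (not_le.2 hst)
  -- integrability
  have hIf : IntervalIntegrable (fun s => g (f s)) volume 0 t₀ :=
    comp_II hg_meas hg_mono hf_cont hf_nonneg ht₀I
  have hIρ : IntervalIntegrable (fun s => g (ρ s)) volume 0 t₀ :=
    comp_II hg_meas hg_mono hρ_cont hρ_nonneg ht₀I
  have hint : (∫ s in (0:ℝ)..t₀, g (f s)) ≤ ∫ s in (0:ℝ)..t₀, g (ρ s) := by
    apply intervalIntegral.integral_mono_ae_restrict ht₀I.1 hIf hIρ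
    have hne : ∀ᵐ s ∂(volume.restrict (Icc (0:ℝ) t₀)), s ≠ t₀ := by
      apply ae_restrict_of_ae
      rw [ae_iff]
      have : {s : ℝ | ¬s ≠ t₀} = {t₀} := by ext s; simp [not_not]
      rw [this]
      exact Real.volume_singleton
    filter_upwards [ae_restrict_mem measurableSet_Icc, hne] with s hs hsne
    have hs' : s < t₀ := lt_of_le_of_ne hs.2 hsne
    have hsI : s ∈ Icc (0:ℝ) T := ⟨hs.1, hs'.le.trans ht₀I.2⟩
    exact hg_mono (hf_nonneg s hsI) (hρ_nonneg s hsI) (hbefore s hs.1 hs').le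
  have := hf t₀ ht₀I
  have := hρ t₀ ht₀I
  linarith


lemma hd_exp_neg (K t : ℝ) : HasDerivAt (fun t : ℝ => Real.exp (-(K*t)))
    (Real.exp (-(K*t)) * (-K)) t := by
  have h1 : HasDerivAt (fun t : ℝ => K*t) K t := by
    simpa using (hasDerivAt_id t).const_mul K
  exact (Real.hasDerivAt_exp _).comp t h1.neg

lemma hd_exp_pos (K t : ℝ) : HasDerivAt (fun t : ℝ => Real.exp (K*t))
    (Real.exp (K*t) * K) t := by
  have h1 : HasDerivAt (fun t : ℝ => K*t) K t := by
    simpa using (hasDerivAt_id t).const_mul K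
  exact (Real.hasDerivAt_exp _).comp t h1

/-- Small-regime supersolution of `r' = phi K r`, staying in `(0,1]`. -/
lemma small_super (K T a' : ℝ) (hK : 0 < K) (hT : 0 ≤ T) (ha' : 0 < a')
    (ha'' : a' ≤ Real.exp (1 - Real.exp (K*T))) :
    ∃ ρ : ℝ → ℝ, Continuous ρ ∧ ρ 0 = a' ∧ MonotoneOn ρ (Icc 0 T) ∧
      (∀ t ∈ Icc (0:ℝ) T, 0 < ρ t ∧ ρ t ≤ 1) ∧
      (∀ t ∈ Icc (0:ℝ) T, ρ t = a' + ∫ s in (0:ℝ)..t, phi K (ρ s)) ∧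
      ρ T = Real.exp ((1 - Real.exp (-(K*T))) + Real.exp (-(K*T)) * Real.log a') := by
  set A : ℝ := 1 - Real.log a' with hAdef
  have hA1 : Real.exp (K*T) ≤ A := by
    have := (Real.log_le_log ha' ha'').trans_eq (Real.log_exp _)
    simp only [hAdef]; linarith
  have hApos : 0 < A := lt_of_lt_of_le (Real.exp_pos _) hA1
  set ρ : ℝ → ℝ := fun t => Real.exp (1 - A * Real.exp (-(K*t))) with hρdef
  have hρcont : Continuous ρ := by fun_prop
  have hρ0 : ρ 0 = a' := by
    simp only [hρdef, mul_zero, neg_zero, Real.exp_zero, mul_one, hAdef]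
    rw [sub_sub_cancel, Real.exp_log ha']
  have hρpos : ∀ t, 0 < ρ t := fun t => Real.exp_pos _
  have hmono : MonotoneOn ρ (Icc 0 T) := by
    intro t₁ _ t₂ _ h12
    apply Real.exp_le_exp.2
    have h1 : Real.exp (-(K*t₂)) ≤ Real.exp (-(K*t₁)) := by
      apply Real.exp_le_exp.2; nlinarith
    nlinarith
  have hρle1 : ∀ t ∈ Icc (0:ℝ) T, ρ t ≤ 1 := by
    intro t ht
    rw [hρdef]
    rw [Real.exp_le_one_iff]
    have h1 : Real.exp (-(K*T)) ≤ Real.exp (-(K*t)) := by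
      apply Real.exp_le_exp.2; nlinarith [ht.2]
    have h2 : Real.exp (K*T) * Real.exp (-(K*T)) = 1 := by
      rw [← Real.exp_add]; simp
    nlinarith [Real.exp_pos (-(K*T)), Real.exp_pos (-(K*t))]
  set θ : ℝ → ℝ := fun t => Real.exp (1 - A * Real.exp (-(K*t))) * (A * (K * Real.exp (-(K*t)))) with hθdef
  have hd : ∀ t, HasDerivAt ρ (θ t) t := by
    intro t
    have h3 : HasDerivAt (fun t => 1 - A * Real.exp (-(K*t)))
        (-(A * (Real.exp (-(K*t)) * (-K)))) t := ((hd_exp_neg K t).const_mul A).const_sub 1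
    have h4 := (Real.hasDerivAt_exp (1 - A * Real.exp (-(K*t)))).comp t h3
    refine h4.congr_deriv ?_
    simp only [hθdef]; ring
  have hθcont : Continuous θ := by fun_prop
  have hlog : ∀ t, Real.log (ρ t) = 1 - A * Real.exp (-(K*t)) := fun t => Real.log_exp _
  have heq : ∀ t ∈ Icc (0:ℝ) T, ρ t = a' + ∫ s in (0:ℝ)..t, phi K (ρ s) := by
    intro t ht
    have hftc : ∫ s in (0:ℝ)..t, θ s = ρ t - ρ 0 :=
      intervalIntegral.integral_eq_sub_of_hasDerivAt (fun s _ => hd s)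
        (hθcont.intervalIntegrable 0 t)
    have hcongr : ∫ s in (0:ℝ)..t, phi K (ρ s) = ∫ s in (0:ℝ)..t, θ s := by
      apply intervalIntegral.integral_congr
      intro s hs
      rw [uIcc_of_le ht.1] at hs
      have hsI : s ∈ Icc (0:ℝ) T := ⟨hs.1, hs.2.trans ht.2⟩
      have h5 : ρ s ≤ 1 := hρle1 s hsI
      have h6 : |Real.log (ρ s)| = -(Real.log (ρ s)) :=
        abs_of_nonpos (Real.log_nonpos (hρpos s).le h5)
      have h7 : phi K (ρ s) = K * ρ s * (1 - Real.log (ρ s)) := by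
        rw [phi, h6]; ring
      show phi K (ρ s) = θ s
      rw [h7, hlog]
      simp only [hρdef, hθdef]
      ring
    rw [hcongr, hftc, hρ0]; ring
  refine ⟨ρ, hρcont, hρ0, hmono, fun t ht => ⟨hρpos t, hρle1 t ht⟩, heq, ?_⟩
  rw [hρdef]
  rw [Real.exp_eq_exp]
  simp only [hAdef]
  ring

/-- Large-regime supersolution of `r' = phi K r`, staying in `[1,∞)`. -/
lemma big_super (K T a' : ℝ) (hK : 0 < K) (hT : 0 ≤ T) (ha' : 1 ≤ a') :
    ∃ ρ : ℝ → ℝ, Continuous ρ ∧ ρ 0 = a' ∧ MonotoneOn ρ (Icc 0 T) ∧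
      (∀ t ∈ Icc (0:ℝ) T, 1 ≤ ρ t) ∧
      (∀ t ∈ Icc (0:ℝ) T, ρ t = a' + ∫ s in (0:ℝ)..t, phi K (ρ s)) ∧
      ρ T = Real.exp ((1 + Real.log a') * Real.exp (K*T) - 1) := by
  have ha'pos : (0:ℝ) < a' := lt_of_lt_of_le one_pos ha'
  set A : ℝ := 1 + Real.log a' with hAdef
  have hA1 : 1 ≤ A := by
    have := Real.log_nonneg ha'; simp only [hAdef]; linarith
  set ρ : ℝ → ℝ := fun t => Real.exp (A * Real.exp (K*t) - 1) with hρdef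
  have hρcont : Continuous ρ := by fun_prop
  have hρ0 : ρ 0 = a' := by
    simp only [hρdef, mul_zero, Real.exp_zero, mul_one, hAdef]
    rw [add_sub_cancel_left, Real.exp_log ha'pos]
  have hmono : MonotoneOn ρ (Icc 0 T) := by
    intro t₁ _ t₂ _ h12
    apply Real.exp_le_exp.2
    have h1 : Real.exp (K*t₁) ≤ Real.exp (K*t₂) := by
      apply Real.exp_le_exp.2; nlinarith
    nlinarith
  have hρge1 : ∀ t ∈ Icc (0:ℝ) T, 1 ≤ ρ t := by
    intro t ht
    rw [hρdef]
    rw [Real.one_le_exp_iff]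
    have h1 : (1:ℝ) ≤ Real.exp (K*t) := by
      rw [Real.one_le_exp_iff]; nlinarith [ht.1]
    nlinarith
  set θ : ℝ → ℝ := fun t => Real.exp (A * Real.exp (K*t) - 1) * (A * (K * Real.exp (K*t))) with hθdef
  have hd : ∀ t, HasDerivAt ρ (θ t) t := by
    intro t
    have h3 : HasDerivAt (fun t => A * Real.exp (K*t) - 1)
        (A * (Real.exp (K*t) * K)) t := ((hd_exp_pos K t).const_mul A).sub_const 1
    have h4 := (Real.hasDerivAt_exp (A * Real.exp (K*t) - 1)).comp t h3
    refine h4.congr_deriv ?_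
    simp only [hθdef]; ring
  have hθcont : Continuous θ := by fun_prop
  have hlog : ∀ t, Real.log (ρ t) = A * Real.exp (K*t) - 1 := fun t => Real.log_exp _
  have heq : ∀ t ∈ Icc (0:ℝ) T, ρ t = a' + ∫ s in (0:ℝ)..t, phi K (ρ s) := by
    intro t ht
    have hftc : ∫ s in (0:ℝ)..t, θ s = ρ t - ρ 0 :=
      intervalIntegral.integral_eq_sub_of_hasDerivAt (fun s _ => hd s)
        (hθcont.intervalIntegrable 0 t)
    have hcongr : ∫ s in (0:ℝ)..t, phi K (ρ s) = ∫ s in (0:ℝ)..t, θ s := by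
      apply intervalIntegral.integral_congr
      intro s hs
      rw [uIcc_of_le ht.1] at hs
      have hsI : s ∈ Icc (0:ℝ) T := ⟨hs.1, hs.2.trans ht.2⟩
      have h5 : 1 ≤ ρ s := hρge1 s hsI
      have h6 : |Real.log (ρ s)| = Real.log (ρ s) :=
        abs_of_nonneg (Real.log_nonneg h5)
      have h7 : phi K (ρ s) = K * ρ s * (1 + Real.log (ρ s)) := by
        rw [phi, h6]
      show phi K (ρ s) = θ s
      rw [h7, hlog]
      simp only [hρdef, hθdef]
      ring
    rw [hcongr, hftc, hρ0]; ring
  exact ⟨ρ, hρcont, hρ0, hmono, hρge1, heq, rfl⟩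


/-- Generic "subsolution below supersolution" bound: if `f` is continuous nonnegative and
satisfies the Osgood integral inequality with constants `ε̄`, it is dominated on `[0,T]`. -/
lemma osgood_small {T Clip εb a' : ℝ} (hT : 0 < T) (hClip : 0 < Clip) (hεb : 0 ≤ εb)
    (f : ℝ → ℝ) (hf_cont : ContinuousOn f (Icc 0 T)) (hf_nonneg : ∀ t ∈ Icc (0:ℝ) T, 0 ≤ f t)
    (hf : ∀ t ∈ Icc (0:ℝ) T, f t ≤ f 0 + ∫ s in (0:ℝ)..t, (phi Clip (f s) + εb))
    (ha'f : f 0 < a') (ha'ε : εb ≤ Clip * a')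
    (ha'small : a' ≤ Real.exp (1 - Real.exp (2*Clip*T))) :
    ∀ t ∈ Icc (0:ℝ) T,
      f t < Real.exp ((1 - Real.exp (-(2*Clip*T))) + Real.exp (-(2*Clip*T)) * Real.log a') := by
  have ha'pos : 0 < a' := lt_of_le_of_lt (hf_nonneg 0 ⟨le_rfl, hT.le⟩) ha'f
  obtain ⟨ρ, hρc, hρ0, hρmono, hρbd, hρeq, hρT⟩ :=
    small_super (2*Clip) T a' (by positivity) hT.le ha'pos ha'small
  have hg_meas : Measurable (fun r => phi Clip r + εb) :=
    (phi_measurable Clip).add measurable_const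
  have hg_mono : MonotoneOn (fun r => phi Clip r + εb) (Ici (0:ℝ)) :=
    fun r hr s hs hrs => by have := phi_mono hClip.le hr hs hrs; simp only []; linarith
  have hρ_nonneg : ∀ t ∈ Icc (0:ℝ) T, 0 ≤ ρ t := fun t ht => (hρbd t ht).1.le
  have hρineq : ∀ t ∈ Icc (0:ℝ) T, a' + (∫ s in (0:ℝ)..t, (phi Clip (ρ s) + εb)) ≤ ρ t := by
    intro t ht
    have h1 : IntervalIntegrable (fun s => phi Clip (ρ s) + εb) volume 0 t :=
      comp_II hg_meas hg_mono hρc.continuousOn hρ_nonneg ht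
    have h2 : IntervalIntegrable (fun s => phi (2*Clip) (ρ s)) volume 0 t :=
      comp_II (phi_measurable _) (phi_mono (by positivity)) hρc.continuousOn hρ_nonneg ht
    have h3 : (∫ s in (0:ℝ)..t, (phi Clip (ρ s) + εb)) ≤ ∫ s in (0:ℝ)..t, phi (2*Clip) (ρ s) := by
      apply intervalIntegral.integral_mono_on ht.1 h1 h2
      intro s hs
      have hsI : s ∈ Icc (0:ℝ) T := ⟨hs.1, hs.2.trans ht.2⟩
      have h4 : a' ≤ ρ s := by
        have := hρmono (⟨le_rfl, hT.le⟩ : (0:ℝ) ∈ Icc (0:ℝ) T) hsI hs.1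
        rw [hρ0] at this; exact this
      have h5 : εb ≤ Clip * ρ s := le_trans ha'ε (by nlinarith)
      have h6 : phi Clip (ρ s) + Clip * ρ s ≤ phi (2*Clip) (ρ s) := by
        unfold phi
        nlinarith [abs_nonneg (Real.log (ρ s)), (hρbd s hsI).1.le]
      linarith
    rw [hρeq t ht]
    linarith
  have hcomp := comparison (fun r => phi Clip r + εb) f ρ hg_meas hg_mono hf_cont hf_nonneg
    hρc.continuousOn hρ_nonneg hf hρineq ha'f
  intro t ht
  calc f t < ρ t := hcomp t ht
    _ ≤ ρ T := hρmono ht ⟨hT.le, le_rfl⟩ ht.2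
    _ = _ := hρT

lemma osgood_big {T Clip a' : ℝ} (hT : 0 < T) (hClip : 0 < Clip)
    (f : ℝ → ℝ) (hf_cont : ContinuousOn f (Icc 0 T)) (hf_nonneg : ∀ t ∈ Icc (0:ℝ) T, 0 ≤ f t)
    (hf : ∀ t ∈ Icc (0:ℝ) T, f t ≤ f 0 + ∫ s in (0:ℝ)..t, (phi Clip (f s) + 0))
    (ha'f : f 0 < a') (ha'1 : 1 ≤ a') :
    ∀ t ∈ Icc (0:ℝ) T,
      f t < Real.exp ((1 + Real.log a') * Real.exp (2*Clip*T) - 1) := by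
  obtain ⟨ρ, hρc, hρ0, hρmono, hρbd, hρeq, hρT⟩ :=
    big_super (2*Clip) T a' (by positivity) hT.le ha'1
  have hg_meas : Measurable (fun r => phi Clip r + 0) :=
    (phi_measurable Clip).add measurable_const
  have hg_mono : MonotoneOn (fun r => phi Clip r + 0) (Ici (0:ℝ)) :=
    fun r hr s hs hrs => by have := phi_mono hClip.le hr hs hrs; simp only []; linarith
  have hρ_nonneg : ∀ t ∈ Icc (0:ℝ) T, 0 ≤ ρ t := fun t ht => le_trans zero_le_one (hρbd t ht)
  have hρineq : ∀ t ∈ Icc (0:ℝ) T, a' + (∫ s in (0:ℝ)..t, (phi Clip (ρ s) + 0)) ≤ ρ t := by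
    intro t ht
    have h1 : IntervalIntegrable (fun s => phi Clip (ρ s) + 0) volume 0 t :=
      comp_II hg_meas hg_mono hρc.continuousOn hρ_nonneg ht
    have h2 : IntervalIntegrable (fun s => phi (2*Clip) (ρ s)) volume 0 t :=
      comp_II (phi_measurable _) (phi_mono (by positivity)) hρc.continuousOn hρ_nonneg ht
    have h3 : (∫ s in (0:ℝ)..t, (phi Clip (ρ s) + 0)) ≤ ∫ s in (0:ℝ)..t, phi (2*Clip) (ρ s) := by
      apply intervalIntegral.integral_mono_on ht.1 h1 h2
      intro s hs
      have hsI : s ∈ Icc (0:ℝ) T := ⟨hs.1, hs.2.trans ht.2⟩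
      have := phi_le_phi_two hClip.le (hρ_nonneg s hsI)
      linarith
    rw [hρeq t ht]
    linarith
  have hcomp := comparison (fun r => phi Clip r + 0) f ρ hg_meas hg_mono hf_cont hf_nonneg
    hρc.continuousOn hρ_nonneg hf hρineq ha'f
  intro t ht
  calc f t < ρ t := hcomp t ht
    _ ≤ ρ T := hρmono ht ⟨hT.le, le_rfl⟩ ht.2
    _ = _ := hρT


/-- The modulus of continuity, depending only on `Clip` and `T`. -/
def omegaMod (Clip T δ : ℝ) : ℝ :=
  if δ < Real.exp (1 - Real.exp (2*Clip*T)) then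
    (if δ ≤ 0 then 0
     else Real.exp ((1 - Real.exp (-(2*Clip*T))) + Real.exp (-(2*Clip*T)) * Real.log δ))
  else Real.exp ((1 + Real.log (max δ 1)) * Real.exp (2*Clip*T) - 1)

lemma omega_nonneg (Clip T : ℝ) : ∀ r, 0 ≤ omegaMod Clip T r := by
  intro r; unfold omegaMod; split_ifs <;> positivity

lemma omega_zero (Clip T : ℝ) : omegaMod Clip T 0 = 0 := by
  unfold omegaMod
  rw [if_pos (Real.exp_pos _), if_pos le_rfl]

lemma exp_neg_mul_exp (x : ℝ) : Real.exp (-x) * Real.exp x = 1 := by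
  rw [← Real.exp_add]; simp

lemma omega_small_le_one {Clip T x : ℝ} (hx : 0 < x)
    (hxδ : x < Real.exp (1 - Real.exp (2*Clip*T))) :
    (1 - Real.exp (-(2*Clip*T))) + Real.exp (-(2*Clip*T)) * Real.log x ≤ 0 := by
  have h1 : Real.log x < 1 - Real.exp (2*Clip*T) := by
    calc Real.log x < Real.log (Real.exp (1 - Real.exp (2*Clip*T))) := Real.log_lt_log hx hxδ
      _ = 1 - Real.exp (2*Clip*T) := Real.log_exp _
  have h2 := exp_neg_mul_exp (2*Clip*T)
  nlinarith [Real.exp_pos (-(2*Clip*T))]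

lemma omega_big_ge_one {Clip T : ℝ} (hCT : 0 ≤ 2*Clip*T) (x : ℝ) :
    1 ≤ Real.exp ((1 + Real.log (max x 1)) * Real.exp (2*Clip*T) - 1) := by
  rw [Real.one_le_exp_iff]
  have h1 : 0 ≤ Real.log (max x 1) := Real.log_nonneg (le_max_right _ _)
  have h2 : 1 ≤ Real.exp (2*Clip*T) := by rw [Real.one_le_exp_iff]; exact hCT
  nlinarith

lemma omega_mono {Clip T : ℝ} (hClip : 0 < Clip) (hT : 0 < T) :
    MonotoneOn (omegaMod Clip T) (Ici 0) := by
  have hCT : 0 ≤ 2*Clip*T := by positivity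
  intro r hr s hs hrs
  by_cases hsδ : s < Real.exp (1 - Real.exp (2*Clip*T))
  · have hrδ : r < Real.exp (1 - Real.exp (2*Clip*T)) := lt_of_le_of_lt hrs hsδ
    simp only [omegaMod]
    rw [if_pos hsδ, if_pos hrδ]
    by_cases hr0 : r ≤ 0
    · rw [if_pos hr0]
      split_ifs <;> positivity
    · rw [if_neg hr0]
      push_neg at hr0
      have hs0 : ¬ s ≤ 0 := by push_neg; exact lt_of_lt_of_le hr0 hrs
      rw [if_neg hs0]
      apply Real.exp_le_exp.2
      have := Real.log_le_log hr0 hrs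
      nlinarith [Real.exp_pos (-(2*Clip*T))]
  · simp only [omegaMod]
    rw [if_neg hsδ]
    by_cases hrδ : r < Real.exp (1 - Real.exp (2*Clip*T))
    · rw [if_pos hrδ]
      by_cases hr0 : r ≤ 0
      · rw [if_pos hr0]
        positivity
      · rw [if_neg hr0]
        push_neg at hr0
        calc Real.exp ((1 - Real.exp (-(2*Clip*T))) + Real.exp (-(2*Clip*T)) * Real.log r)
            ≤ 1 := by rw [Real.exp_le_one_iff]; exact omega_small_le_one hr0 hrδ
          _ ≤ _ := omega_big_ge_one hCT s
    · rw [if_neg hrδ]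
      apply Real.exp_le_exp.2
      have h1 : Real.log (max r 1) ≤ Real.log (max s 1) :=
        Real.log_le_log (lt_of_lt_of_le one_pos (le_max_right _ _)) (max_le_max hrs le_rfl)
      nlinarith [Real.exp_pos (2*Clip*T)]

lemma omega_cont {Clip T : ℝ} (hClip : 0 < Clip) (hT : 0 < T) :
    ContinuousWithinAt (omegaMod Clip T) (Ici 0) 0 := by
  rw [ContinuousWithinAt, omega_zero]
  rw [Metric.tendsto_nhdsWithin_nhds]
  intro ε hε
  set β := Real.exp (-(2*Clip*T)) with hβ
  have hβpos : 0 < β := Real.exp_pos _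
  set δ₀ := Real.exp (1 - Real.exp (2*Clip*T)) with hδ₀
  set δε := Real.exp ((Real.log ε - (1-β))/β) with hδε
  refine ⟨min δ₀ δε, by positivity, ?_⟩
  intro x hx hdist
  rw [Real.dist_eq, sub_zero] at hdist
  rw [Real.dist_eq, sub_zero]
  have hxabs : |x| = x := abs_of_nonneg hx
  rw [hxabs] at hdist
  have hxδ₀ : x < δ₀ := lt_of_lt_of_le hdist (min_le_left _ _)
  have hxδε : x < δε := lt_of_lt_of_le hdist (min_le_right _ _)
  rw [omegaMod, if_pos hxδ₀]
  by_cases hx0 : x ≤ 0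
  · rw [if_pos hx0]; simpa using hε
  · rw [if_neg hx0]
    push_neg at hx0
    rw [abs_of_nonneg (Real.exp_pos _).le]
    have h1 : Real.log x < (Real.log ε - (1-β))/β := by
      calc Real.log x < Real.log δε := Real.log_lt_log hx0 hxδε
        _ = (Real.log ε - (1-β))/β := Real.log_exp _
    have h2 : (1-β) + β * Real.log x < Real.log ε := by
      have h3 : β * Real.log x < Real.log ε - (1-β) := by
        have h4 := mul_lt_mul_of_pos_left h1 hβpos
        have h5 : β * ((Real.log ε - (1-β)) / β) = Real.log ε - (1-β) := by
          field_simp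
        linarith
      linarith
    calc Real.exp ((1-β) + β * Real.log x) < Real.exp (Real.log ε) := Real.exp_lt_exp.2 h2
      _ = ε := Real.exp_log hε


variable {E : Type*} [NormedAddCommGroup E] [NormedSpace ℝ E] [CompleteSpace E]
  [MeasurableSpace E] [BorelSpace E] [SecondCountableTopology E]


/-- Integrability of the controlled vector field along a continuous curve. -/
lemma field_II {T M' : ℝ} (c' : E → ℝ → ℝ)
    (hc' : Measurable fun q : E × ℝ => c' q.1 q.2) (hM' : ∀ x t, |c' x t| ≤ M')
    {b : ℝ → E} (hb : Measurable b) (hbb : ∀ᵐ s ∂volume, s ∈ Icc (0:ℝ) T → ‖b s‖ ≤ 1)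
    {Z : ℝ → E} (hZ : ContinuousOn Z (Icc 0 T)) {t : ℝ} (ht : t ∈ Icc (0:ℝ) T) :
    IntervalIntegrable (fun s => c' (Z s) s • b s) volume 0 t := by
  have hM'0 : 0 ≤ M' := le_trans (abs_nonneg _) (hM' 0 0)
  have hsub : Ioc (0:ℝ) t ⊆ Icc 0 T := fun s hs => ⟨hs.1.le, hs.2.trans ht.2⟩
  have hZm : AEMeasurable Z (volume.restrict (Ioc 0 t)) :=
    (hZ.aemeasurable measurableSet_Icc).mono_measure (Measure.restrict_mono hsub le_rfl)
  have hpair : AEMeasurable (fun s => (Z s, s)) (volume.restrict (Ioc 0 t)) :=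
    hZm.prodMk aemeasurable_id
  have hcm : AEMeasurable (fun s => c' (Z s) s) (volume.restrict (Ioc 0 t)) :=
    hc'.comp_aemeasurable hpair
  apply II_of_bdd (B := M') ht.1
  · exact hcm.aestronglyMeasurable.smul (hb.aestronglyMeasurable.restrict)
  · filter_upwards [ae_restrict_mem measurableSet_Ioc, ae_restrict_of_ae hbb] with s hs hb'
    rw [norm_smul, Real.norm_eq_abs]
    calc |c' (Z s) s| * ‖b s‖ ≤ M' * 1 :=
          mul_le_mul (hM' _ _) (hb' (hsub hs)) (norm_nonneg _) hM'0
      _ = M' := mul_one M'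

/-- Integral growth inequality for the distance of two approximate solutions. -/
lemma growth {T Clip M₁ M₂ ε₁ ε₂ : ℝ} (hClip : 0 < Clip) (hε₁ : 0 ≤ ε₁) (hε₂ : 0 ≤ ε₂)
    (c c₁ c₂ : E → ℝ → ℝ)
    (hc₁ : Measurable fun q : E × ℝ => c₁ q.1 q.2)
    (hc₂ : Measurable fun q : E × ℝ => c₂ q.1 q.2)
    (hM₁ : ∀ x t, |c₁ x t| ≤ M₁) (hM₂ : ∀ x t, |c₂ x t| ≤ M₂)
    (hLL : ∀ x y, ∀ t ∈ Icc (0:ℝ) T, |c x t - c y t| ≤ phi Clip ‖x - y‖)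
    (hc₁c : ∀ x, ∀ t ∈ Icc (0:ℝ) T, |c₁ x t - c x t| ≤ ε₁)
    (hc₂c : ∀ x, ∀ t ∈ Icc (0:ℝ) T, |c₂ x t - c x t| ≤ ε₂)
    (b : ℝ → E) (hb : Measurable b) (hbb : ∀ᵐ s ∂volume, s ∈ Icc (0:ℝ) T → ‖b s‖ ≤ 1)
    (X Y : ℝ → E) (hX : ContinuousOn X (Icc 0 T)) (hY : ContinuousOn Y (Icc 0 T))
    (heqX : ∀ t ∈ Icc (0:ℝ) T, X t = X 0 + ∫ s in (0:ℝ)..t, c₁ (X s) s • b s)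
    (heqY : ∀ t ∈ Icc (0:ℝ) T, Y t = Y 0 + ∫ s in (0:ℝ)..t, c₂ (Y s) s • b s) :
    ∀ t ∈ Icc (0:ℝ) T,
      ‖X t - Y t‖ ≤ ‖X 0 - Y 0‖ + ∫ s in (0:ℝ)..t, (phi Clip ‖X s - Y s‖ + (ε₁ + ε₂)) := by
  intro t ht
  have hsub : Ioc (0:ℝ) t ⊆ Icc 0 T := fun s hs => ⟨hs.1.le, hs.2.trans ht.2⟩
  have hIX : IntervalIntegrable (fun s => c₁ (X s) s • b s) volume 0 t :=
    field_II c₁ hc₁ hM₁ hb hbb hX ht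
  have hIY : IntervalIntegrable (fun s => c₂ (Y s) s • b s) volume 0 t :=
    field_II c₂ hc₂ hM₂ hb hbb hY ht
  have e1 : X t - Y t = (X 0 - Y 0)
      + ∫ s in (0:ℝ)..t, (c₁ (X s) s • b s - c₂ (Y s) s • b s) := by
    rw [intervalIntegral.integral_sub hIX hIY, heqX t ht, heqY t ht]
    abel
  have hgmono : MonotoneOn (fun r => phi Clip r + (ε₁ + ε₂)) (Ici (0:ℝ)) :=
    fun r hr s hs hrs => by
      have := phi_mono hClip.le hr hs hrs; simp only []; linarith
  have hgmeas : Measurable (fun r => phi Clip r + (ε₁ + ε₂)) :=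
    (phi_measurable Clip).add measurable_const
  have hRI : IntervalIntegrable (fun s => phi Clip ‖X s - Y s‖ + (ε₁ + ε₂)) volume 0 t :=
    comp_II hgmeas hgmono ((hX.sub hY).norm) (fun s _ => norm_nonneg _) ht
  have hbound : ‖∫ s in (0:ℝ)..t, (c₁ (X s) s • b s - c₂ (Y s) s • b s)‖
      ≤ |∫ s in (0:ℝ)..t, (phi Clip ‖X s - Y s‖ + (ε₁ + ε₂))| := by
    apply intervalIntegral.norm_integral_le_abs_of_norm_le _ hRI
    have huIoc : Set.uIoc (0:ℝ) t = Ioc 0 t := uIoc_of_le ht.1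
    rw [huIoc]
    filter_upwards [ae_restrict_mem measurableSet_Ioc, ae_restrict_of_ae hbb] with s hs hb'
    have hsI : s ∈ Icc (0:ℝ) T := hsub hs
    have h1 : c₁ (X s) s • b s - c₂ (Y s) s • b s = (c₁ (X s) s - c₂ (Y s) s) • b s := by
      rw [sub_smul]
    rw [h1, norm_smul, Real.norm_eq_abs]
    have h2 : |c₁ (X s) s - c₂ (Y s) s| ≤ phi Clip ‖X s - Y s‖ + (ε₁ + ε₂) := by
      have t1 : |c₁ (X s) s - c (X s) s| ≤ ε₁ := hc₁c _ _ hsI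
      have t2 : |c (X s) s - c (Y s) s| ≤ phi Clip ‖X s - Y s‖ := hLL _ _ _ hsI
      have t3 : |c (Y s) s - c₂ (Y s) s| ≤ ε₂ := by
        rw [abs_sub_comm]; exact hc₂c _ _ hsI
      calc |c₁ (X s) s - c₂ (Y s) s|
          = |(c₁ (X s) s - c (X s) s) + (c (X s) s - c (Y s) s) + (c (Y s) s - c₂ (Y s) s)| := by
            ring_nf
        _ ≤ |c₁ (X s) s - c (X s) s| + |c (X s) s - c (Y s) s| + |c (Y s) s - c₂ (Y s) s| :=
            (abs_add_le _ _).trans (by gcongr; exact abs_add_le _ _)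
        _ ≤ ε₁ + phi Clip ‖X s - Y s‖ + ε₂ := by gcongr
        _ = phi Clip ‖X s - Y s‖ + (ε₁ + ε₂) := by ring
    calc |c₁ (X s) s - c₂ (Y s) s| * ‖b s‖ ≤ |c₁ (X s) s - c₂ (Y s) s| * 1 := by
          apply mul_le_mul_of_nonneg_left (hb' hsI) (abs_nonneg _)
      _ = |c₁ (X s) s - c₂ (Y s) s| := mul_one _
      _ ≤ phi Clip ‖X s - Y s‖ + (ε₁ + ε₂) := h2
  have habs : |∫ s in (0:ℝ)..t, (phi Clip ‖X s - Y s‖ + (ε₁ + ε₂))|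
      = ∫ s in (0:ℝ)..t, (phi Clip ‖X s - Y s‖ + (ε₁ + ε₂)) := by
    apply abs_of_nonneg
    apply intervalIntegral.integral_nonneg ht.1
    intro s _
    have := phi_nonneg hClip.le (norm_nonneg (X s - Y s))
    linarith
  calc ‖X t - Y t‖ = ‖(X 0 - Y 0) + ∫ s in (0:ℝ)..t, (c₁ (X s) s • b s - c₂ (Y s) s • b s)‖ := by
        rw [← e1]
    _ ≤ ‖X 0 - Y 0‖ + ‖∫ s in (0:ℝ)..t, (c₁ (X s) s • b s - c₂ (Y s) s • b s)‖ := norm_add_le _ _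
    _ ≤ ‖X 0 - Y 0‖ + ∫ s in (0:ℝ)..t, (phi Clip ‖X s - Y s‖ + (ε₁ + ε₂)) := by
        rw [← habs]; linarith [hbound]


/-- Master stability estimate: two solutions with the same control and velocity field. -/
theorem stability_master {T Clip M : ℝ} (hT : 0 < T) (hClip : 0 < Clip)
    (c : E → ℝ → ℝ) (hc : Measurable fun q : E × ℝ => c q.1 q.2)
    (hM : ∀ x t, |c x t| ≤ M)
    (hLL : ∀ x y, ∀ t ∈ Icc (0:ℝ) T, |c x t - c y t| ≤ phi Clip ‖x - y‖)
    (b : ℝ → E) (hb : Measurable b) (hbb : ∀ᵐ s ∂volume, s ∈ Icc (0:ℝ) T → ‖b s‖ ≤ 1)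
    (X Y : ℝ → E) (hX : ContinuousOn X (Icc 0 T)) (hY : ContinuousOn Y (Icc 0 T))
    (heqX : ∀ t ∈ Icc (0:ℝ) T, X t = X 0 + ∫ s in (0:ℝ)..t, c (X s) s • b s)
    (heqY : ∀ t ∈ Icc (0:ℝ) T, Y t = Y 0 + ∫ s in (0:ℝ)..t, c (Y s) s • b s) :
    ∀ t ∈ Icc (0:ℝ) T, ‖X t - Y t‖ ≤ omegaMod Clip T ‖X 0 - Y 0‖ := by
  set f : ℝ → ℝ := fun s => ‖X s - Y s‖ with hfdef
  have hf_cont : ContinuousOn f (Icc 0 T) := (hX.sub hY).norm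
  have hf_nonneg : ∀ t ∈ Icc (0:ℝ) T, 0 ≤ f t := fun t _ => norm_nonneg _
  have hgrow := growth (M₁ := M) (M₂ := M) hClip le_rfl le_rfl c c c hc hc hM hM hLL
    (fun x t _ => by simp) (fun x t _ => by simp) b hb hbb X Y hX hY heqX heqY
  have hf0 : ∀ t ∈ Icc (0:ℝ) T, f t ≤ f 0 + ∫ s in (0:ℝ)..t, (phi Clip (f s) + 0) := by
    intro t ht
    have h1 := hgrow t ht
    have h2 : (∫ s in (0:ℝ)..t, (phi Clip ‖X s - Y s‖ + ((0:ℝ) + 0)))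
        = ∫ s in (0:ℝ)..t, (phi Clip (f s) + 0) := by
      apply intervalIntegral.integral_congr
      intro s _
      simp [hfdef]
    rw [h2] at h1
    exact h1
  set β := Real.exp (-(2*Clip*T)) with hβ
  set δ₀ := Real.exp (1 - Real.exp (2*Clip*T)) with hδ₀
  set δ := ‖X 0 - Y 0‖ with hδ
  have hδf : f 0 = δ := rfl
  have hδ0 : 0 ≤ δ := norm_nonneg _
  intro t ht
  by_cases hcase : δ < δ₀
  · have key : ∀ a', δ < a' → a' ≤ δ₀ →
        f t < Real.exp ((1 - β) + β * Real.log a') := by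
      intro a' h1 h2
      exact osgood_small hT hClip le_rfl f hf_cont hf_nonneg hf0
        (by rw [hδf]; exact h1) (by nlinarith) h2 t ht
    rcases eq_or_lt_of_le hδ0 with h0 | h0
    · have hω : omegaMod Clip T δ = 0 := by rw [← h0]; exact omega_zero _ _
      rw [hω]
      have hlim : Filter.Tendsto (fun a' => Real.exp ((1 - β) + β * Real.log a'))
          (nhdsWithin 0 (Ioi (0:ℝ))) (nhds 0) := by
        apply Real.tendsto_exp_atBot.comp
        apply Filter.tendsto_atBot_add_const_left _ (1 - β)
        exact (Real.tendsto_log_nhdsGT_zero).const_mul_atBot (Real.exp_pos _)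
      apply ge_of_tendsto hlim
      filter_upwards [Ioc_mem_nhdsGT_of_mem (⟨le_rfl, Real.exp_pos _⟩ : (0:ℝ) ∈ Ico 0 δ₀)]
        with a' ha'
      exact (key a' (by rw [← h0]; exact ha'.1) ha'.2).le
    · have hω : omegaMod Clip T δ = Real.exp ((1 - β) + β * Real.log δ) := by
        rw [omegaMod, if_pos hcase, if_neg (not_le.2 h0)]
      rw [hω]
      have hlim : Filter.Tendsto (fun a' => Real.exp ((1 - β) + β * Real.log a'))
          (nhdsWithin δ (Ioi δ)) (nhds (Real.exp ((1 - β) + β * Real.log δ))) := by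
        apply Filter.Tendsto.mono_left _ nhdsWithin_le_nhds
        exact (Real.continuous_exp.continuousAt.comp
          ((continuousAt_const.add (continuousAt_const.mul
            (Real.continuousAt_log h0.ne'))))).tendsto
      apply ge_of_tendsto hlim
      filter_upwards [Ioc_mem_nhdsGT_of_mem (⟨le_rfl, hcase⟩ : δ ∈ Ico δ δ₀)] with a' ha'
      exact (key a' ha'.1 ha'.2).le
  · have hω : omegaMod Clip T δ
        = Real.exp ((1 + Real.log (max δ 1)) * Real.exp (2*Clip*T) - 1) := if_neg hcase
    rw [hω]
    have hmaxpos : (0:ℝ) < max δ 1 := lt_of_lt_of_le one_pos (le_max_right _ _)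
    have key : ∀ a', max δ 1 < a' →
        f t < Real.exp ((1 + Real.log a') * Real.exp (2*Clip*T) - 1) := by
      intro a' h1
      exact osgood_big hT hClip f hf_cont hf_nonneg hf0
        (by rw [hδf]; exact lt_of_le_of_lt (le_max_left _ _) h1)
        (le_of_lt (lt_of_le_of_lt (le_max_right _ _) h1)) t ht
    have hlim : Filter.Tendsto (fun a' => Real.exp ((1 + Real.log a') * Real.exp (2*Clip*T) - 1))
        (nhdsWithin (max δ 1) (Ioi (max δ 1)))
        (nhds (Real.exp ((1 + Real.log (max δ 1)) * Real.exp (2*Clip*T) - 1))) := by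
      apply Filter.Tendsto.mono_left _ nhdsWithin_le_nhds
      exact (Real.continuous_exp.continuousAt.comp
        ((((continuousAt_const.add (Real.continuousAt_log hmaxpos.ne')).mul
          continuousAt_const).sub continuousAt_const))).tendsto
    apply ge_of_tendsto hlim
    filter_upwards [self_mem_nhdsWithin] with a' ha'
    exact (key a' ha').le


/-- Carathéodory existence theorem for globally Lipschitz fields. -/
theorem caratheodory {T M L : ℝ} (hT : 0 < T) (hM : 0 ≤ M) (hL : 0 ≤ L)
    (F : E → ℝ → E) (hF : Measurable fun q : E × ℝ => F q.1 q.2)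
    (hFb : ∀ᵐ s ∂(volume : Measure ℝ), s ∈ Icc (0:ℝ) T → ∀ x, ‖F x s‖ ≤ M)
    (hFlip : ∀ᵐ s ∂(volume : Measure ℝ), s ∈ Icc (0:ℝ) T → ∀ x y, ‖F x s - F y s‖ ≤ L * ‖x - y‖)
    (x₀ : E) :
    ∃ X : ℝ → E, Continuous X ∧ X 0 = x₀ ∧
      ∀ t ∈ Icc (0:ℝ) T, X t = x₀ + ∫ s in (0:ℝ)..t, F (X s) s := by
  have h0I : (0:ℝ) ∈ Icc (0:ℝ) T := ⟨le_rfl, hT.le⟩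
  set I : Set ℝ := Icc (0:ℝ) T with hI
  let ext : C(↥I, E) → ℝ → E := fun u t => u (projIcc 0 T hT.le t)
  have hext_cont : ∀ u, Continuous (ext u) := fun u => u.continuous.comp continuous_projIcc
  have hext_eq : ∀ u (t : ↥I), ext u (t : ℝ) = u t := by
    intro u t
    simp only [ext]
    congr 1
    exact projIcc_val hT.le t
  -- integrability of the field along any curve
  have hint : ∀ u : C(↥I, E), IntervalIntegrable (fun s => F (ext u s) s) volume 0 T := by
    intro u
    apply II_of_bdd (B := M) hT.le
    · exact ((hF.comp ((hext_cont u).measurable.prodMk measurable_id)).aestronglyMeasurable).restrict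
    · filter_upwards [ae_restrict_mem measurableSet_Ioc, ae_restrict_of_ae hFb] with s hs h2
      exact h2 ⟨hs.1.le, hs.2⟩ _
  have hint' : ∀ (u : C(↥I, E)) (t : ℝ), t ∈ I → IntervalIntegrable (fun s => F (ext u s) s) volume 0 t :=
    fun u t ht => (hint u).mono_set (by rw [uIcc_of_le ht.1, uIcc_of_le hT.le]; exact Icc_subset_Icc le_rfl ht.2)
  -- the Picard operator
  have hprim : ∀ u : C(↥I, E), ContinuousOn (fun t => ∫ s in (0:ℝ)..t, F (ext u s) s) I := by
    intro u
    have := intervalIntegral.continuousOn_primitive_interval' (hint u) (by rw [uIcc_of_le hT.le]; exact h0I)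
    rwa [uIcc_of_le hT.le] at this
  let Φ : C(↥I, E) → C(↥I, E) := fun u =>
    ⟨fun t => x₀ + ∫ s in (0:ℝ)..(t:ℝ), F (ext u s) s, by
      apply continuous_const.add
      exact (hprim u).comp_continuous continuous_subtype_val (fun x => x.2)⟩
  have hΦ_apply : ∀ u (t : ↥I), Φ u t = x₀ + ∫ s in (0:ℝ)..(t:ℝ), F (ext u s) s := fun u t => rfl
  -- pointwise integral estimate
  have hkey : ∀ (u v : C(↥I, E)) (t : ℝ) (ht : t ∈ I) (g : ℝ → ℝ),
      IntervalIntegrable g volume 0 t → (∀ s ∈ Icc (0:ℝ) t, 0 ≤ g s) →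
      (∀ s ∈ Icc (0:ℝ) t, dist (ext u s) (ext v s) ≤ g s) →
      dist (Φ u ⟨t, ht⟩) (Φ v ⟨t, ht⟩) ≤ ∫ s in (0:ℝ)..t, L * g s := by
    intro u v t ht g hgI hgnn hbd
    rw [hΦ_apply, hΦ_apply, dist_eq_norm]
    have h1 : (x₀ + ∫ s in (0:ℝ)..t, F (ext u s) s) - (x₀ + ∫ s in (0:ℝ)..t, F (ext v s) s)
        = ∫ s in (0:ℝ)..t, (F (ext u s) s - F (ext v s) s) := by
      rw [intervalIntegral.integral_sub (hint' u t ht) (hint' v t ht)]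
      abel
    rw [h1]
    have h2 : ‖∫ s in (0:ℝ)..t, (F (ext u s) s - F (ext v s) s)‖
        ≤ |∫ s in (0:ℝ)..t, L * g s| := by
      apply intervalIntegral.norm_integral_le_abs_of_norm_le _ (hgI.const_mul L)
      rw [uIoc_of_le ht.1]
      filter_upwards [ae_restrict_mem measurableSet_Ioc, ae_restrict_of_ae hFlip] with s hs h3
      have hsIcc : s ∈ Icc (0:ℝ) t := ⟨hs.1.le, hs.2⟩
      calc ‖F (ext u s) s - F (ext v s) s‖ ≤ L * ‖ext u s - ext v s‖ :=
            h3 ⟨hs.1.le, hs.2.trans ht.2⟩ _ _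
        _ ≤ L * g s := by
            rw [← dist_eq_norm]
            exact mul_le_mul_of_nonneg_left (hbd s hsIcc) hL
    have h3 : |∫ s in (0:ℝ)..t, L * g s| = ∫ s in (0:ℝ)..t, L * g s := by
      apply abs_of_nonneg
      apply intervalIntegral.integral_nonneg ht.1
      intro s hs
      exact mul_nonneg hL (hgnn s hs)
    rw [h3] at h2
    exact h2
  -- Lipschitz continuity of Φ
  have hΦlip : ∀ u v : C(↥I, E), dist (Φ u) (Φ v) ≤ L * T * dist u v := by
    intro u v
    have hnn : 0 ≤ L * T * dist u v := by positivity
    rw [ContinuousMap.dist_le hnn]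
    intro t
    have h1 := hkey u v (t : ℝ) t.2 (fun _ => dist u v)
      (intervalIntegrable_const) (fun s _ => dist_nonneg)
      (fun s hs => by
        have := hext_eq u (projIcc 0 T hT.le s) -- dummy
        calc dist (ext u s) (ext v s) = dist (u (projIcc 0 T hT.le s)) (v (projIcc 0 T hT.le s)) := rfl
          _ ≤ dist u v := ContinuousMap.dist_apply_le_dist _)
    have h2 : (∫ _ in (0:ℝ)..(t:ℝ), L * dist u v) = (t:ℝ) * (L * dist u v) := by
      rw [intervalIntegral.integral_const]
      simp
    calc dist (Φ u t) (Φ v t) = dist (Φ u ⟨(t:ℝ), t.2⟩) (Φ v ⟨(t:ℝ), t.2⟩) := rfl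
      _ ≤ ∫ _ in (0:ℝ)..(t:ℝ), L * dist u v := h1
      _ = (t:ℝ) * (L * dist u v) := h2
      _ ≤ L * T * dist u v := by nlinarith [t.2.1, t.2.2, dist_nonneg (x := u) (y := v)]
  have hΦcont : Continuous Φ := by
    have h1 : LipschitzWith (⟨L*T, by positivity⟩ : NNReal) Φ :=
      LipschitzWith.of_dist_le_mul (fun u v => hΦlip u v)
    exact h1.continuous
  -- Picard iterates
  set u0 : C(↥I, E) := ContinuousMap.const _ x₀ with hu0
  set f : ℕ → C(↥I, E) := fun n => Φ^[n] u0 with hfdef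
  have hppt : ∀ n, ∀ (t : ℝ) (ht : t ∈ I),
      dist (f n ⟨t,ht⟩) (f (n+1) ⟨t,ht⟩)
        ≤ M * L^n / (Nat.factorial (n+1) : ℝ) * t^(n+1) := by
    intro n
    induction n with
    | zero =>
      intro t ht
      have h2 : f 1 = Φ u0 := by rw [hfdef]; simp
      have h3 : dist (f 0 ⟨t,ht⟩) (f 1 ⟨t,ht⟩) = ‖∫ s in (0:ℝ)..t, F (ext u0 s) s‖ := by
        rw [show f 0 = u0 from rfl, h2, hΦ_apply, dist_eq_norm]
        simp [hu0]
      rw [h3]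
      have h4 : ‖∫ s in (0:ℝ)..t, F (ext u0 s) s‖ ≤ |∫ _ in (0:ℝ)..t, M| := by
        apply intervalIntegral.norm_integral_le_abs_of_norm_le _ intervalIntegrable_const
        rw [uIoc_of_le ht.1]
        filter_upwards [ae_restrict_mem measurableSet_Ioc, ae_restrict_of_ae hFb] with s hs h5
        exact h5 ⟨hs.1.le, hs.2.trans ht.2⟩ _
      have h5 : |∫ _ in (0:ℝ)..t, M| = t * M := by
        rw [intervalIntegral.integral_const, sub_zero, smul_eq_mul]
        exact abs_of_nonneg (mul_nonneg ht.1 hM)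
      rw [h5] at h4
      refine h4.trans (le_of_eq ?_)
      simp [Nat.factorial]
      ring
    | succ n ih =>
      intro t ht
      have hs1 : f (n+1) = Φ (f n) := Function.iterate_succ_apply' Φ n u0
      have hs2 : f (n+1+1) = Φ (f (n+1)) := Function.iterate_succ_apply' Φ (n+1) u0
      set C : ℝ := M * L^n / (Nat.factorial (n+1) : ℝ) with hC
      have hCnn : 0 ≤ C := by
        apply div_nonneg (mul_nonneg hM (pow_nonneg hL _)) (by positivity)
      have h1 : dist (f (n+1) ⟨t,ht⟩) (f (n+1+1) ⟨t,ht⟩)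
          ≤ ∫ s in (0:ℝ)..t, L * (C * s^(n+1)) := by
        rw [hs1, hs2]
        apply hkey (f n) (f (n+1)) t ht (fun s => C * s^(n+1))
          ((continuous_const.mul (continuous_pow _)).intervalIntegrable 0 t)
          (fun s hs => mul_nonneg hCnn (pow_nonneg hs.1 _))
        intro s hs
        have hsI : s ∈ I := ⟨hs.1, hs.2.trans ht.2⟩
        have e1 : ext (f n) s = f n ⟨s, hsI⟩ := by
          simp only [ext]; congr 1; exact projIcc_of_mem _ hsI
        have e2 : ext (f (n+1)) s = f (n+1) ⟨s, hsI⟩ := by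
          simp only [ext]; congr 1; exact projIcc_of_mem _ hsI
        rw [e1, e2]
        exact ih s hsI
      have h2 : (∫ s in (0:ℝ)..t, L * (C * s^(n+1)))
          = (L * C) * (t^(n+1+1) / (n+1+1)) := by
        have e3 : (fun s : ℝ => L * (C * s^(n+1))) = fun s : ℝ => (L*C) * s^(n+1) := by
          funext s; ring
        rw [e3, intervalIntegral.integral_const_mul, integral_pow]
        have : (0:ℝ)^(n+1+1) = 0 := by norm_num
        rw [this, sub_zero]
        push_cast
        ring
      have h3 : (L * C) * (t^(n+1+1) / (n+1+1))
          = M * L^(n+1) / (Nat.factorial (n+1+1) : ℝ) * t^(n+1+1) := by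
        rw [hC, Nat.factorial_succ (n+1)]
        have hfne : ((Nat.factorial (n+1) : ℝ)) ≠ 0 := by positivity
        push_cast
        field_simp
        ring
      rw [h2, h3] at h1
      exact h1
  -- uniform (sup-metric) distance bound and summability
  have hd : ∀ n, dist (f n) (f (n+1)) ≤ M * T * ((L*T)^n / (Nat.factorial n : ℝ)) := by
    intro n
    have hnn : 0 ≤ M * T * ((L*T)^n / (Nat.factorial n : ℝ)) := by
      apply mul_nonneg (by positivity)
      apply div_nonneg (pow_nonneg (by positivity) _) (by positivity)
    rw [ContinuousMap.dist_le hnn]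
    intro t
    have e : M * T * ((L*T)^n / (Nat.factorial n : ℝ))
        = M * L^n / (Nat.factorial n : ℝ) * T^(n+1) := by
      rw [mul_pow]; ring
    have h1 : ((t:ℝ))^(n+1) ≤ T^(n+1) := pow_le_pow_left₀ t.2.1 t.2.2 _
    have h2 : M * L^n / ((Nat.factorial (n+1) : ℝ)) ≤ M * L^n / (Nat.factorial n : ℝ) := by
      apply div_le_div_of_nonneg_left ?_ ?_ ?_ -- might be div_le_div_of_le_left; check
      · exact mul_nonneg hM (pow_nonneg hL _)
      · exact_mod_cast Nat.factorial_pos n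
      · exact_mod_cast Nat.factorial_le (Nat.le_succ n)
    calc dist (f n t) (f (n+1) t) = dist (f n ⟨(t:ℝ), t.2⟩) (f (n+1) ⟨(t:ℝ), t.2⟩) := rfl
      _ ≤ M * L^n / (Nat.factorial (n+1) : ℝ) * ((t:ℝ))^(n+1) := hppt n (t:ℝ) t.2
      _ ≤ M * L^n / (Nat.factorial n : ℝ) * T^(n+1) := by
          apply mul_le_mul h2 h1 (pow_nonneg t.2.1 _)
          apply div_nonneg (mul_nonneg hM (pow_nonneg hL _)) (by positivity)
      _ = M * T * ((L*T)^n / (Nat.factorial n : ℝ)) := e.symm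
  have hsum : Summable (fun n => M * T * ((L*T)^n / (Nat.factorial n : ℝ))) :=
    (Real.summable_pow_div_factorial (L*T)).mul_left (M*T)
  have hcauchy : CauchySeq f := cauchySeq_of_dist_le_of_summable _ hd hsum
  obtain ⟨u, hu⟩ := cauchySeq_tendsto_of_complete hcauchy
  have hfix : Φ u = u := by
    have h1 : Filter.Tendsto (fun n => Φ (f n)) atTop (nhds (Φ u)) :=
      (hΦcont.continuousAt).tendsto.comp hu
    have h2 : (fun n => Φ (f n)) = fun n => f (n+1) :=
      funext fun n => (Function.iterate_succ_apply' Φ n u0).symm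
    have h3 : Filter.Tendsto (fun n => f (n+1)) atTop (nhds u) :=
      hu.comp (tendsto_add_atTop_nat 1)
    exact tendsto_nhds_unique (h2 ▸ h1) h3
  have heq : ∀ t ∈ I, ext u t = x₀ + ∫ s in (0:ℝ)..t, F (ext u s) s := by
    intro t ht
    have h1 : ext u t = u ⟨t, ht⟩ := by
      simp only [ext]; congr 1; exact projIcc_of_mem _ ht
    rw [h1]
    conv_lhs => rw [← hfix]
    exact hΦ_apply u ⟨t, ht⟩
  refine ⟨ext u, hext_cont u, ?_, heq⟩
  have h0 := heq 0 h0I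
  simpa using h0


/-- Lipschitz regularization (inf-convolution over a countable dense set). -/
lemma mollify {T Clip M : ℝ} (hClip : 0 < Clip) (hM : 0 ≤ M)
    (c : E → ℝ → ℝ) (hc : Measurable fun q : E × ℝ => c q.1 q.2)
    (hcb : ∀ x t, |c x t| ≤ M)
    (hLL : ∀ x y, ∀ t ∈ Icc (0:ℝ) T, |c x t - c y t| ≤ phi Clip ‖x - y‖)
    (n : ℕ) (hn : 0 < n) :
    ∃ c' : E → ℝ → ℝ, (Measurable fun q : E × ℝ => c' q.1 q.2) ∧
      (∀ x t, |c' x t| ≤ M) ∧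
      (∀ x y t, |c' x t - c' y t| ≤ (n:ℝ) * ‖x - y‖) ∧
      (∀ x, ∀ t ∈ Icc (0:ℝ) T, |c' x t - c x t| ≤ phi Clip (2*M/n)) := by
  have hE : Nonempty E := ⟨0⟩
  obtain ⟨y, hy⟩ : ∃ y : ℕ → E, DenseRange y :=
    ⟨TopologicalSpace.denseSeq E, TopologicalSpace.denseRange_denseSeq E⟩
  set c' : E → ℝ → ℝ := fun x t => ⨅ k : ℕ, (c (y k) t + (n:ℝ) * ‖x - y k‖) with hc'
  have hbdd : ∀ x t, BddBelow (range fun k : ℕ => (c (y k) t + (n:ℝ) * ‖x - y k‖)) := by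
    intro x t
    refine ⟨-M, ?_⟩
    rintro r ⟨k, rfl⟩
    have h1 := (abs_le.1 (hcb (y k) t)).1
    have h2 : (0:ℝ) ≤ (n:ℝ) * ‖x - y k‖ := by positivity
    simp only []
    linarith
  have hle : ∀ x t k, c' x t ≤ c (y k) t + (n:ℝ) * ‖x - y k‖ :=
    fun x t k => ciInf_le (hbdd x t) k
  -- measurability
  have hmeas : Measurable fun q : E × ℝ => c' q.1 q.2 := by
    apply Measurable.iInf
    intro k
    have h1 : Measurable fun q : E × ℝ => c (y k) q.2 :=
      hc.comp ((measurable_const.prodMk measurable_snd) :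
        Measurable fun q : E × ℝ => ((y k : E), q.2))
    exact h1.add ((measurable_fst.sub measurable_const).norm.const_mul _)
  -- lower bound: c' ≥ c - err  (on Icc)
  have hlow : ∀ x, ∀ t ∈ Icc (0:ℝ) T, c x t - phi Clip (2*M/n) ≤ c' x t := by
    intro x t ht
    apply le_ciInf
    intro k
    have herr : c x t - c (y k) t ≤ phi Clip (2*M/n) + (n:ℝ) * ‖x - y k‖ := by
      rcases le_total ‖x - y k‖ (2*M/n) with hcase | hcase
      · have h1 : |c x t - c (y k) t| ≤ phi Clip ‖x - y k‖ := hLL _ _ _ ht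
        have h2 : phi Clip ‖x - y k‖ ≤ phi Clip (2*M/n) :=
          phi_mono hClip.le (norm_nonneg _) (le_trans (norm_nonneg _) hcase) hcase
        have h3 : (0:ℝ) ≤ (n:ℝ) * ‖x - y k‖ := by positivity
        have := (abs_le.1 h1).2
        linarith
      · have h1 : |c x t - c (y k) t| ≤ 2*M := by
          have := hcb x t; have := hcb (y k) t
          rw [abs_le] at *
          constructor <;> linarith [(abs_le.1 (hcb x t)).1, (abs_le.1 (hcb x t)).2,
            (abs_le.1 (hcb (y k) t)).1, (abs_le.1 (hcb (y k) t)).2]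
        have h2 : 2*M ≤ (n:ℝ) * ‖x - y k‖ := by
          have hn' : (0:ℝ) < n := by exact_mod_cast hn
          rw [div_le_iff₀ hn'] at hcase
          calc 2*M ≤ ‖x - y k‖ * n := hcase
            _ = (n:ℝ) * ‖x - y k‖ := mul_comm _ _
        have h3 := phi_nonneg (C := Clip) (r := 2*M/n) hClip.le (by positivity)
        have := (abs_le.1 h1).2
        linarith
    linarith
  -- upper bound : c' ≤ c  (uses density)
  have hup : ∀ x, ∀ t ∈ Icc (0:ℝ) T, c' x t ≤ c x t := by
    intro x t ht
    by_contra hcon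
    push_neg at hcon
    set γ := c' x t - c x t with hγ
    have hγpos : 0 < γ := by simp only [hγ]; linarith
    -- choose η small with  Clip*(η + 2*√η) + n*η < γ
    have hlim : Tendsto (fun η : ℝ => Clip * (η + 2*Real.sqrt η) + (n:ℝ)*η)
        (nhds 0) (nhds 0) := by
      have : Continuous fun η : ℝ => Clip * (η + 2*Real.sqrt η) + (n:ℝ)*η := by
        continuity
      have h0 : (Clip * ((0:ℝ) + 2*Real.sqrt 0) + (n:ℝ)*0) = 0 := by simp
      simpa [h0] using this.tendsto 0
    have hev : ∀ᶠ η : ℝ in nhds 0, Clip * (η + 2*Real.sqrt η) + (n:ℝ)*η < γ :=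
      hlim.eventually (eventually_lt_nhds hγpos)  -- check name
    obtain ⟨η, hη1, hη0, hηball⟩ : ∃ η, (Clip * (η + 2*Real.sqrt η) + (n:ℝ)*η < γ) ∧ 0 < η ∧ η ≤ 1 := by
      obtain ⟨ε, hε, hball⟩ := Metric.eventually_nhds_iff.1 hev
      refine ⟨min (ε/2) 1, hball ?_, by positivity, min_le_right _ _⟩
      rw [Real.dist_eq, sub_zero, abs_of_nonneg (by positivity : (0:ℝ) ≤ min (ε/2) 1)]
      calc min (ε/2) 1 ≤ ε/2 := min_le_left _ _
        _ < ε := by linarith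
    obtain ⟨k, hk⟩ := hy.exists_dist_lt x hη0
    have hnorm : ‖x - y k‖ < η := by
      rw [← dist_eq_norm]
      exact hk
    have h1 : c' x t ≤ c (y k) t + (n:ℝ) * ‖x - y k‖ := hle x t k
    have h2 : c (y k) t ≤ c x t + phi Clip ‖x - y k‖ := by
      have := (abs_le.1 (hLL (y k) x t ht)).2
      have habs : ‖y k - x‖ = ‖x - y k‖ := norm_sub_rev _ _
      rw [habs] at this
      linarith
    have h3 : phi Clip ‖x - y k‖ ≤ Clip * (η + 2*Real.sqrt η) := by
      calc phi Clip ‖x - y k‖ ≤ phi Clip η :=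
            phi_mono hClip.le (norm_nonneg _) (le_trans (norm_nonneg _) hnorm.le) hnorm.le
        _ ≤ Clip * (η + 2*Real.sqrt η) := phi_le_sqrt hClip.le hη0.le hηball
    have h4 : (n:ℝ) * ‖x - y k‖ ≤ (n:ℝ) * η :=
      mul_le_mul_of_nonneg_left hnorm.le (by positivity)
    have : c' x t < c' x t := by
      calc c' x t ≤ c (y k) t + (n:ℝ) * ‖x - y k‖ := h1
        _ ≤ c x t + phi Clip ‖x - y k‖ + (n:ℝ) * ‖x - y k‖ := by linarith
        _ ≤ c x t + Clip * (η + 2*Real.sqrt η) + (n:ℝ)*η := by linarith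
        _ < c x t + γ := by linarith
        _ = c' x t := by rw [hγ]; ring
    exact lt_irrefl _ this
  -- global lower bound
  have hlow2 : ∀ x t, -M ≤ c' x t := by
    intro x t
    apply le_ciInf
    intro k
    have h1 := (abs_le.1 (hcb (y k) t)).1
    have h2 : (0:ℝ) ≤ (n:ℝ) * ‖x - y k‖ := by positivity
    linarith
  -- Lipschitz estimate for c'
  have hlip : ∀ x x' t, |c' x t - c' x' t| ≤ (n:ℝ) * ‖x - x'‖ := by
    have key : ∀ x x' t, c' x t ≤ c' x' t + (n:ℝ) * ‖x - x'‖ := by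
      intro x x' t
      have h1 : c' x t - (n:ℝ) * ‖x - x'‖ ≤ c' x' t := by
        apply le_ciInf
        intro k
        have h2 : c' x t ≤ c (y k) t + (n:ℝ) * ‖x - y k‖ := hle x t k
        have h3 : ‖x - y k‖ ≤ ‖x - x'‖ + ‖x' - y k‖ := by
          calc ‖x - y k‖ = dist x (y k) := (dist_eq_norm _ _).symm
            _ ≤ dist x x' + dist x' (y k) := dist_triangle _ _ _
            _ = ‖x - x'‖ + ‖x' - y k‖ := by rw [dist_eq_norm, dist_eq_norm]
        have h4 : (n:ℝ) * ‖x - y k‖ ≤ (n:ℝ) * ‖x - x'‖ + (n:ℝ) * ‖x' - y k‖ := by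
          have := mul_le_mul_of_nonneg_left h3 (by positivity : (0:ℝ) ≤ (n:ℝ))
          linarith [this]
        linarith
      linarith
    intro x x' t
    rw [abs_le]
    constructor
    · have := key x' x t
      rw [norm_sub_rev] at this
      linarith
    · have := key x x' t
      linarith
  -- clamp
  refine ⟨fun x t => max (min (c' x t) M) (-M), ?_, ?_, ?_, ?_⟩
  · exact (hmeas.min measurable_const).max measurable_const
  · intro x t
    rw [abs_le]
    constructor
    · exact le_max_right _ _
    · apply max_le (min_le_right _ _) (by linarith)
  · intro x x' t
    calc |max (min (c' x t) M) (-M) - max (min (c' x' t) M) (-M)|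
        ≤ |min (c' x t) M - min (c' x' t) M| := abs_max_sub_max_le_abs _ _ _
      _ ≤ |c' x t - c' x' t| := by
          have := abs_min_sub_min_le_max (c' x t) M (c' x' t) M
          simpa using this
      _ ≤ (n:ℝ) * ‖x - x'‖ := hlip x x' t
  · intro x t ht
    have h1 : c' x t ≤ M := le_trans (hup x t ht) (le_trans (le_abs_self _) (hcb x t))
    have h2 : -M ≤ c' x t := hlow2 x t
    have h3 : max (min (c' x t) M) (-M) = c' x t := by
      rw [min_eq_left h1, max_eq_left h2]
    show |c' x t ⊓ M ⊔ -M - c x t| ≤ phi Clip (2 * M / (n:ℝ))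
    rw [h3, abs_le]
    have h4 := hlow x t ht
    have h5 := hup x t ht
    have h6 := phi_nonneg (C := Clip) (r := 2*M/n) hClip.le (by positivity)
    constructor <;> linarith


lemma phi_tendsto {Clip : ℝ} (hClip : 0 ≤ Clip) {g : ℕ → ℝ} (hg0 : ∀ n, 0 ≤ g n)
    (hg : Tendsto g atTop (nhds 0)) :
    Tendsto (fun n => phi Clip (g n)) atTop (nhds 0) := by
  apply squeeze_zero' (Eventually.of_forall fun n => phi_nonneg hClip (hg0 n))
  · have h1 : ∀ᶠ n in atTop, g n ≤ 1 := hg.eventually (eventually_le_nhds one_pos)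
    filter_upwards [h1] with n hn
    exact phi_le_sqrt hClip (hg0 n) hn
  · have hcont : Continuous fun r : ℝ => Clip * (r + 2 * Real.sqrt r) := by continuity
    have := (hcont.tendsto 0).comp hg
    simpa [Function.comp_def] using this

lemma eps_tendsto {Clip M : ℝ} (hClip : 0 ≤ Clip) (hM : 0 ≤ M) :
    Tendsto (fun n : ℕ => phi Clip (2*M/((n:ℝ)+1))) atTop (nhds 0) := by
  apply phi_tendsto hClip (fun n => by positivity)
  have h1 : Tendsto (fun n : ℕ => 2*M/(n:ℝ)) atTop (nhds 0) :=
    tendsto_const_div_atTop_nhds_zero_nat (2*M)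
  have h2 := h1.comp (tendsto_add_atTop_nat 1)
  have h3 : ((fun n : ℕ => 2*M/(n:ℝ)) ∘ fun n : ℕ => n + 1)
      = fun n : ℕ => 2*M/((n:ℝ)+1) := by
    funext n; simp [Function.comp]
  rwa [h3] at h2

variable {E : Type*} [NormedAddCommGroup E] [NormedSpace ℝ E] [CompleteSpace E]
  [MeasurableSpace E] [BorelSpace E] [SecondCountableTopology E]

theorem existence_master {T Clip M : ℝ} (hT : 0 < T) (hClip : 0 < Clip)
    (c : E → ℝ → ℝ) (hc : Measurable fun q : E × ℝ => c q.1 q.2)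
    (hcb : ∀ x t, |c x t| ≤ M)
    (hLL : ∀ x y, ∀ t ∈ Icc (0:ℝ) T, |c x t - c y t| ≤ phi Clip ‖x - y‖)
    (b : ℝ → E) (hb : Measurable b) (hbb : ∀ᵐ s ∂volume, s ∈ Icc (0:ℝ) T → ‖b s‖ ≤ 1)
    (x₀ : E) :
    ∃ X : ℝ → E, ContinuousOn X (Icc 0 T) ∧ X 0 = x₀ ∧
      ∀ t ∈ Icc (0:ℝ) T, X t = x₀ + ∫ s in (0:ℝ)..t, c (X s) s • b s := by
  have hM0 : 0 ≤ M := le_trans (abs_nonneg _) (hcb 0 0)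
  have h0I : (0:ℝ) ∈ Icc (0:ℝ) T := ⟨le_rfl, hT.le⟩
  -- mollified fields
  have hmol : ∀ n : ℕ, ∃ c' : E → ℝ → ℝ, (Measurable fun q : E × ℝ => c' q.1 q.2) ∧
      (∀ x t, |c' x t| ≤ M) ∧
      (∀ x y t, |c' x t - c' y t| ≤ ((n+1 : ℕ):ℝ) * ‖x - y‖) ∧
      (∀ x, ∀ t ∈ Icc (0:ℝ) T, |c' x t - c x t| ≤ phi Clip (2*M/(n+1 : ℕ))) :=
    fun n => mollify hClip hM0 c hc hcb hLL (n+1) (Nat.succ_pos n)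
  choose cs hcsm hcsb hcsl hcsc using hmol
  set eps : ℕ → ℝ := fun n => phi Clip (2*M/((n:ℝ)+1)) with heps
  have hepsnn : ∀ n, 0 ≤ eps n := fun n => phi_nonneg hClip.le (by positivity)
  have hcsc' : ∀ n, ∀ x, ∀ t ∈ Icc (0:ℝ) T, |cs n x t - c x t| ≤ eps n := by
    intro n x t ht
    have := hcsc n x t ht
    have hcast : (2*M/((n+1 : ℕ):ℝ)) = 2*M/((n:ℝ)+1) := by push_cast; ring_nf
    rw [hcast] at this
    exact this
  have hepslim : Tendsto eps atTop (nhds 0) := eps_tendsto hClip.le hM0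
  -- solutions of mollified problems
  have hsol : ∀ n : ℕ, ∃ X : ℝ → E, Continuous X ∧ X 0 = x₀ ∧
      ∀ t ∈ Icc (0:ℝ) T, X t = x₀ + ∫ s in (0:ℝ)..t, cs n (X s) s • b s := by
    intro n
    apply caratheodory hT hM0 (by positivity : (0:ℝ) ≤ ((n+1 : ℕ):ℝ))
      (fun x s => cs n x s • b s)
      ((hcsm n).smul (hb.comp measurable_snd))
    · filter_upwards [hbb] with s hs hsI x
      rw [norm_smul, Real.norm_eq_abs]
      calc |cs n x s| * ‖b s‖ ≤ M * 1 :=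
            mul_le_mul (hcsb n x s) (hs hsI) (norm_nonneg _) hM0
        _ = M := mul_one _
    · filter_upwards [hbb] with s hs hsI x y
      have h1 : cs n x s • b s - cs n y s • b s = (cs n x s - cs n y s) • b s := by
        rw [sub_smul]
      rw [h1, norm_smul, Real.norm_eq_abs]
      calc |cs n x s - cs n y s| * ‖b s‖ ≤ (((n+1 : ℕ):ℝ) * ‖x - y‖) * 1 :=
            mul_le_mul (hcsl n x y s) (hs hsI) (norm_nonneg _) (by positivity)
        _ = ((n+1 : ℕ):ℝ) * ‖x - y‖ := mul_one _
  choose Xs hXscont hXs0 hXseq using hsol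
  -- the approximations as continuous maps on the compact interval
  set I : Set ℝ := Icc (0:ℝ) T with hI
  set un : ℕ → C(↥I, E) := fun n => ⟨fun t => Xs n (t : ℝ),
    (hXscont n).comp continuous_subtype_val⟩ with hun
  -- growth estimate for pairs
  have hpair : ∀ m k : ℕ, ∀ t ∈ Icc (0:ℝ) T, ‖Xs m t - Xs k t‖
      ≤ ‖Xs m 0 - Xs k 0‖ + ∫ s in (0:ℝ)..t, (phi Clip ‖Xs m s - Xs k s‖ + (eps m + eps k)) := by
    intro m k
    apply growth hClip (hepsnn m) (hepsnn k) c (cs m) (cs k) (hcsm m) (hcsm k)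
      (hcsb m) (hcsb k) hLL (hcsc' m) (hcsc' k) b hb hbb
      (Xs m) (Xs k) (hXscont m).continuousOn (hXscont k).continuousOn
    · intro t ht; rw [hXs0 m]; exact hXseq m t ht
    · intro t ht; rw [hXs0 k]; exact hXseq k t ht
  have hcauchy : CauchySeq un := by
    rw [Metric.cauchySeq_iff]
    intro ε hε
    -- choose a' with the small-regime bound below ε
    set β := Real.exp (-(2*Clip*T)) with hβ
    set δ₀ := Real.exp (1 - Real.exp (2*Clip*T)) with hδ₀
    have hlim : Tendsto (fun a' => Real.exp ((1 - β) + β * Real.log a'))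
        (nhdsWithin 0 (Ioi (0:ℝ))) (nhds 0) := by
      apply Real.tendsto_exp_atBot.comp
      apply Filter.tendsto_atBot_add_const_left _ (1 - β)
      exact (Real.tendsto_log_nhdsGT_zero).const_mul_atBot (Real.exp_pos _)
    have hev : ∀ᶠ a' in nhdsWithin 0 (Ioi (0:ℝ)),
        (Real.exp ((1 - β) + β * Real.log a') < ε ∧ a' ∈ Ioc (0:ℝ) δ₀) := by
      apply Eventually.and
      · exact hlim.eventually (eventually_lt_nhds hε)
      · exact eventually_of_mem (Ioc_mem_nhdsGT_of_mem ⟨le_rfl, Real.exp_pos _⟩) (fun x hx => hx)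
    obtain ⟨a', ha'1, ha'2⟩ := hev.exists
    -- choose N with eps small
    have hevN : ∀ᶠ n in atTop, eps n < Clip * a' / 2 :=
      hepslim.eventually (eventually_lt_nhds (by have := ha'2.1; positivity))
    obtain ⟨N, hN⟩ := eventually_atTop.1 hevN
    refine ⟨N, fun m hm k hk => ?_⟩
    set f : ℝ → ℝ := fun s => ‖Xs m s - Xs k s‖ with hf
    have hf0 : f 0 = 0 := by
      simp only [hf, hXs0 m, hXs0 k, sub_self, norm_zero]
    have hfb : ∀ t ∈ Icc (0:ℝ) T, f t
        < Real.exp ((1 - β) + β * Real.log a') := by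
      apply osgood_small hT hClip
        (by have := hepsnn m; have := hepsnn k; linarith : (0:ℝ) ≤ eps m + eps k) f
        (((hXscont m).sub (hXscont k)).norm.continuousOn)
        (fun t _ => norm_nonneg _)
      · intro t ht
        exact hpair m k t ht
      · rw [hf0]; exact ha'2.1
      · have h1 := (hN m hm).le
        have h2 := (hN k hk).le
        linarith
      · exact ha'2.2
    have hb1 : dist (un m) (un k) ≤ Real.exp ((1 - β) + β * Real.log a') / 1 := by
      rw [ContinuousMap.dist_le (by positivity)]
      intro t
      rw [div_one]
      calc dist (un m t) (un k t) = ‖Xs m (t:ℝ) - Xs k (t:ℝ)‖ := dist_eq_norm _ _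
        _ ≤ Real.exp ((1 - β) + β * Real.log a') := (hfb (t:ℝ) t.2).le
    rw [div_one] at hb1
    exact lt_of_le_of_lt hb1 ha'1
  obtain ⟨u, hu⟩ := cauchySeq_tendsto_of_complete hcauchy
  set X : ℝ → E := fun t => u (projIcc 0 T hT.le t) with hX
  have hXcont : Continuous X := u.continuous.comp continuous_projIcc
  have hXval : ∀ t (ht : t ∈ Icc (0:ℝ) T), X t = u ⟨t, ht⟩ := by
    intro t ht
    simp only [hX]
    congr 1
    exact projIcc_of_mem _ ht
  have hptw : ∀ t : ↥I, Tendsto (fun n => Xs n (t : ℝ)) atTop (nhds (u t)) := by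
    intro t
    have h1 : Continuous fun v : C(↥I, E) => v t := continuous_eval_const t
    exact (h1.tendsto u).comp hu
  set d : ℕ → ℝ := fun n => dist (un n) u with hd
  have hdlim : Tendsto d atTop (nhds 0) := tendsto_iff_dist_tendsto_zero.1 hu
  have hdnn : ∀ n, 0 ≤ d n := fun n => dist_nonneg
  have hsup : ∀ n, ∀ t ∈ Icc (0:ℝ) T, ‖Xs n t - X t‖ ≤ d n := by
    intro n t ht
    rw [hXval t ht]
    calc ‖Xs n t - u ⟨t, ht⟩‖ = dist (un n ⟨t, ht⟩) (u ⟨t, ht⟩) := (dist_eq_norm _ _).symm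
      _ ≤ d n := ContinuousMap.dist_apply_le_dist _
  -- initial value
  have hX0 : X 0 = x₀ := by
    have h1 := hptw ⟨0, h0I⟩
    have h2 : ∀ n, Xs n (0:ℝ) = x₀ := hXs0
    have h3 : Tendsto (fun _ : ℕ => x₀) atTop (nhds (u ⟨0, h0I⟩)) := by
      convert h1 using 1
      funext n
      exact (h2 n).symm
    have := tendsto_nhds_unique h3 tendsto_const_nhds
    rw [hXval 0 h0I, ← this]
  refine ⟨X, hXcont.continuousOn, hX0, ?_⟩
  intro t ht
  -- pass to the limit in the integral equation
  have hInt_n : ∀ n, IntervalIntegrable (fun s => cs n (Xs n s) s • b s) volume 0 t := by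
    intro n
    have hsub : Ioc (0:ℝ) t ⊆ Icc 0 T := fun s hs => ⟨hs.1.le, hs.2.trans ht.2⟩
    apply II_of_bdd (B := M) ht.1
    · exact ((((hcsm n).comp (((hXscont n).measurable).prodMk measurable_id)).smul
        hb).aestronglyMeasurable).restrict
    · filter_upwards [ae_restrict_mem measurableSet_Ioc, ae_restrict_of_ae hbb] with s hs hbs
      rw [norm_smul, Real.norm_eq_abs]
      calc |cs n (Xs n s) s| * ‖b s‖ ≤ M * 1 :=
            mul_le_mul (hcsb n _ _) (hbs (hsub hs)) (norm_nonneg _) hM0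
        _ = M := mul_one _
  have hInt : IntervalIntegrable (fun s => c (X s) s • b s) volume 0 t := by
    have hsub : Ioc (0:ℝ) t ⊆ Icc 0 T := fun s hs => ⟨hs.1.le, hs.2.trans ht.2⟩
    apply II_of_bdd (B := M) ht.1
    · exact (((hc.comp ((hXcont.measurable).prodMk measurable_id)).smul
        hb).aestronglyMeasurable).restrict
    · filter_upwards [ae_restrict_mem measurableSet_Ioc, ae_restrict_of_ae hbb] with s hs hbs
      rw [norm_smul, Real.norm_eq_abs]
      calc |c (X s) s| * ‖b s‖ ≤ M * 1 :=
            mul_le_mul (hcb _ _) (hbs (hsub hs)) (norm_nonneg _) hM0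
        _ = M := mul_one _
  have hdistI : ∀ n, dist (x₀ + ∫ s in (0:ℝ)..t, cs n (Xs n s) s • b s)
      (x₀ + ∫ s in (0:ℝ)..t, c (X s) s • b s) ≤ T * (eps n + phi Clip (d n)) := by
    intro n
    rw [dist_eq_norm]
    have h1 : (x₀ + ∫ s in (0:ℝ)..t, cs n (Xs n s) s • b s)
        - (x₀ + ∫ s in (0:ℝ)..t, c (X s) s • b s)
        = ∫ s in (0:ℝ)..t, (cs n (Xs n s) s • b s - c (X s) s • b s) := by
      rw [intervalIntegral.integral_sub (hInt_n n) hInt]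
      abel
    rw [h1]
    have h2 : ‖∫ s in (0:ℝ)..t, (cs n (Xs n s) s • b s - c (X s) s • b s)‖
        ≤ |∫ _ in (0:ℝ)..t, (eps n + phi Clip (d n))| := by
      apply intervalIntegral.norm_integral_le_abs_of_norm_le _ intervalIntegrable_const
      rw [uIoc_of_le ht.1]
      filter_upwards [ae_restrict_mem measurableSet_Ioc, ae_restrict_of_ae hbb] with s hs hbs
      have hsI : s ∈ Icc (0:ℝ) T := ⟨hs.1.le, hs.2.trans ht.2⟩
      have e1 : cs n (Xs n s) s • b s - c (X s) s • b s
          = (cs n (Xs n s) s - c (X s) s) • b s := by rw [sub_smul]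
      rw [e1, norm_smul, Real.norm_eq_abs]
      have h3 : |cs n (Xs n s) s - c (X s) s| ≤ eps n + phi Clip (d n) := by
        have t1 : |cs n (Xs n s) s - c (Xs n s) s| ≤ eps n := hcsc' n _ _ hsI
        have t2 : |c (Xs n s) s - c (X s) s| ≤ phi Clip ‖Xs n s - X s‖ := hLL _ _ _ hsI
        have t3 : phi Clip ‖Xs n s - X s‖ ≤ phi Clip (d n) :=
          phi_mono hClip.le (norm_nonneg _)
            (le_trans (norm_nonneg _) (hsup n s hsI)) (hsup n s hsI)
        calc |cs n (Xs n s) s - c (X s) s|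
            = |(cs n (Xs n s) s - c (Xs n s) s) + (c (Xs n s) s - c (X s) s)| := by ring_nf
          _ ≤ |cs n (Xs n s) s - c (Xs n s) s| + |c (Xs n s) s - c (X s) s| := abs_add_le _ _
          _ ≤ eps n + phi Clip (d n) := by linarith
      calc |cs n (Xs n s) s - c (X s) s| * ‖b s‖
          ≤ |cs n (Xs n s) s - c (X s) s| * 1 :=
            mul_le_mul_of_nonneg_left (hbs hsI) (abs_nonneg _)
        _ = |cs n (Xs n s) s - c (X s) s| := mul_one _
        _ ≤ eps n + phi Clip (d n) := h3
    have h4 : |∫ _ in (0:ℝ)..t, (eps n + phi Clip (d n))| = t * (eps n + phi Clip (d n)) := by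
      rw [intervalIntegral.integral_const, sub_zero, smul_eq_mul]
      apply abs_of_nonneg
      have := phi_nonneg hClip.le (hdnn n)
      have := hepsnn n
      have := ht.1
      positivity
    have h5 : t * (eps n + phi Clip (d n)) ≤ T * (eps n + phi Clip (d n)) := by
      apply mul_le_mul_of_nonneg_right ht.2
      have := phi_nonneg hClip.le (hdnn n)
      have := hepsnn n
      linarith
    calc ‖∫ s in (0:ℝ)..t, (cs n (Xs n s) s • b s - c (X s) s • b s)‖
        ≤ |∫ _ in (0:ℝ)..t, (eps n + phi Clip (d n))| := h2
      _ = t * (eps n + phi Clip (d n)) := h4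
      _ ≤ T * (eps n + phi Clip (d n)) := h5
  have hblim : Tendsto (fun n => T * (eps n + phi Clip (d n))) atTop (nhds 0) := by
    have h1 := hepslim.add (phi_tendsto hClip.le hdnn hdlim)
    have h2 := h1.const_mul T
    simpa using h2
  have hRHS : Tendsto (fun n => x₀ + ∫ s in (0:ℝ)..t, cs n (Xs n s) s • b s) atTop
      (nhds (x₀ + ∫ s in (0:ℝ)..t, c (X s) s • b s)) := by
    rw [tendsto_iff_dist_tendsto_zero]
    apply squeeze_zero (fun n => dist_nonneg) (fun n => hdistI n) hblim
  have hLHS : Tendsto (fun n => Xs n t) atTop (nhds (X t)) := by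
    rw [hXval t ht]
    exact hptw ⟨t, ht⟩
  have heqn : ∀ n, Xs n t = x₀ + ∫ s in (0:ℝ)..t, cs n (Xs n s) s • b s :=
    fun n => hXseq n t ht
  have : Tendsto (fun n => Xs n t) atTop
      (nhds (x₀ + ∫ s in (0:ℝ)..t, c (X s) s • b s)) := by
    convert hRHS using 1
    funext n
    exact heqn n
  exact tendsto_nhds_unique hLHS this


/-- for a Borel measurable, bounded velocity `c` which is log-Lipschitz in
space, the controlled ODE `x'(s) = c(x(s),s) b(s)`, `x(0) = x₀` (in integral form) has a
unique absolutely continuous solution on `[0,T]`; moreover there is a modulus of continuity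
`ω̃`, depending only on the log-Lipschitz constant `Clip` and on `T`, such that two solutions
with the same control satisfy `|x(t) − y(t)| ≤ ω̃(|x(0) − y(0)|)` on `[0,T]`. -/
theorem stmt1 (N : ℕ) (T Clip : ℝ) (hT : 0 < T) (hClip : 0 < Clip) :
    (∀ c : EuclideanSpace ℝ (Fin N) → ℝ → ℝ,
      (Measurable fun q : EuclideanSpace ℝ (Fin N) × ℝ => c q.1 q.2) →
      (∃ M, ∀ x t, |c x t| ≤ M) →
      (∀ x y, ∀ t ∈ Set.Icc (0 : ℝ) T,
        |c x t - c y t| ≤ Clip * ‖x - y‖ * (1 + |Real.log ‖x - y‖|)) →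
      ∀ b : ℝ → EuclideanSpace ℝ (Fin N), Measurable b →
        (∀ᵐ s ∂volume, s ∈ Set.Icc (0 : ℝ) T → ‖b s‖ ≤ 1) →
        ∀ x₀ : EuclideanSpace ℝ (Fin N),
          ∃ X : ℝ → EuclideanSpace ℝ (Fin N),
            (ContinuousOn X (Set.Icc (0 : ℝ) T) ∧ X 0 = x₀ ∧
              ∀ t ∈ Set.Icc (0 : ℝ) T, X t = x₀ + ∫ s in (0 : ℝ)..t, c (X s) s • b s) ∧
            ∀ Y : ℝ → EuclideanSpace ℝ (Fin N),
              (ContinuousOn Y (Set.Icc (0 : ℝ) T) ∧ Y 0 = x₀ ∧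
                ∀ t ∈ Set.Icc (0 : ℝ) T, Y t = x₀ + ∫ s in (0 : ℝ)..t, c (Y s) s • b s) →
              ∀ t ∈ Set.Icc (0 : ℝ) T, Y t = X t) ∧
    ∃ ω : ℝ → ℝ, (∀ r, 0 ≤ ω r) ∧ MonotoneOn ω (Set.Ici 0) ∧ ω 0 = 0 ∧
      ContinuousWithinAt ω (Set.Ici 0) 0 ∧
      ∀ c : EuclideanSpace ℝ (Fin N) → ℝ → ℝ,
        (Measurable fun q : EuclideanSpace ℝ (Fin N) × ℝ => c q.1 q.2) →
        (∃ M, ∀ x t, |c x t| ≤ M) →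
        (∀ x y, ∀ t ∈ Set.Icc (0 : ℝ) T,
          |c x t - c y t| ≤ Clip * ‖x - y‖ * (1 + |Real.log ‖x - y‖|)) →
        ∀ b : ℝ → EuclideanSpace ℝ (Fin N), Measurable b →
          (∀ᵐ s ∂volume, s ∈ Set.Icc (0 : ℝ) T → ‖b s‖ ≤ 1) →
          ∀ X Y : ℝ → EuclideanSpace ℝ (Fin N),
            ContinuousOn X (Set.Icc (0 : ℝ) T) →
            (∀ t ∈ Set.Icc (0 : ℝ) T, X t = X 0 + ∫ s in (0 : ℝ)..t, c (X s) s • b s) →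
            ContinuousOn Y (Set.Icc (0 : ℝ) T) →
            (∀ t ∈ Set.Icc (0 : ℝ) T, Y t = Y 0 + ∫ s in (0 : ℝ)..t, c (Y s) s • b s) →
            ∀ t ∈ Set.Icc (0 : ℝ) T, ‖X t - Y t‖ ≤ ω ‖X 0 - Y 0‖ := by
  constructor
  · -- existence and uniqueness
    intro c hc hMex hLL b hb hbb x₀
    obtain ⟨M, hM⟩ := hMex
    obtain ⟨X, hXc, hX0, hXeq⟩ := existence_master hT hClip c hc hM hLL b hb hbb x₀
    refine ⟨X, ⟨hXc, hX0, hXeq⟩, ?_⟩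
    rintro Y ⟨hYc, hY0, hYeq⟩ t ht
    have heqX' : ∀ t ∈ Set.Icc (0:ℝ) T, X t = X 0 + ∫ s in (0:ℝ)..t, c (X s) s • b s := by
      intro t' ht'; rw [hX0]; exact hXeq t' ht'
    have heqY' : ∀ t ∈ Set.Icc (0:ℝ) T, Y t = Y 0 + ∫ s in (0:ℝ)..t, c (Y s) s • b s := by
      intro t' ht'; rw [hY0]; exact hYeq t' ht'
    have hstab := stability_master hT hClip c hc hM hLL b hb hbb Y X hYc hXc heqY' heqX' t ht
    have h0 : ‖Y 0 - X 0‖ = 0 := by rw [hY0, hX0, sub_self, norm_zero]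
    rw [h0, omega_zero] at hstab
    have h1 : Y t - X t = 0 := norm_le_zero_iff.1 hstab
    exact sub_eq_zero.1 h1
  · -- stability
    refine ⟨omegaMod Clip T, omega_nonneg _ _, omega_mono hClip hT, omega_zero _ _,
      omega_cont hClip hT, ?_⟩
    intro c hc hMex hLL b hb hbb X Y hX heqX hY heqY t ht
    obtain ⟨M, hM⟩ := hMex
    exact stability_master hT hClip c hc hM hLL b hb hbb X Y hX hY heqX heqY t ht
end
end

section
/- Let c be a velocity satisfying (V1) and (V2), and let u₀ : ℝ^N → ℝ be bounded and Lipschitz continuous with Lipschitz constant ‖Du₀‖_∞. Define the value function u(x,t) = sup{u₀(y) : there exists an admissible trajectory x̄ on [0,t] with x̄(0) = y and x̄(t) = x}. Then u is uniformly continuous on ℝ^N×[0,T], nondecreasing in t, and satisfies u₀(x) ≤ u(x,t) ≤ u₀(x) + B‖Du₀‖_∞ t for all (x,t) ∈ ℝ^N×[0,T]; moreover its modulus of continuity in space depends only on ‖Du₀‖_∞ and the constant C of (V2). -/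
open MeasureTheory Set Metric

set_option maxHeartbeats 1000000

open intervalIntegral

noncomputable section

/-- `AdmTraj c t X X'` : `X` is an admissible trajectory on `[0,t]` for the velocity `c`,
i.e. an absolutely continuous curve (written in integral form with a.e. derivative `X'`)
with `|X'(s)| ≤ c(X(s),s)` for a.e. `s ∈ [0,t]`. -/
def AdmTraj {N : ℕ} (c : EuclideanSpace ℝ (Fin N) → ℝ → ℝ) (t : ℝ)
    (X X' : ℝ → EuclideanSpace ℝ (Fin N)) : Prop :=
  IntervalIntegrable X' volume 0 t ∧
  (∀ s ∈ Set.Icc (0 : ℝ) t, X s = X 0 + ∫ r in (0 : ℝ)..s, X' r) ∧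
  (∀ᵐ s ∂volume, s ∈ Set.Icc (0 : ℝ) t → ‖X' s‖ ≤ c (X s) s)

/-- The reachable set at time `t` from the initial set `K₀`. -/
def reach {N : ℕ} (c : EuclideanSpace ℝ (Fin N) → ℝ → ℝ)
    (K₀ : Set (EuclideanSpace ℝ (Fin N))) (t : ℝ) : Set (EuclideanSpace ℝ (Fin N)) :=
  {x | ∃ X X', AdmTraj c t X X' ∧ X 0 ∈ K₀ ∧ X t = x}

/-- The minimal time function `z(x) = min { t ∈ [0,T] : x ∈ K(t) }`. -/
def minTime {N : ℕ} (c : EuclideanSpace ℝ (Fin N) → ℝ → ℝ)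
    (K₀ : Set (EuclideanSpace ℝ (Fin N))) (T : ℝ) (x : EuclideanSpace ℝ (Fin N)) : ℝ :=
  sInf {t | t ∈ Set.Icc (0 : ℝ) T ∧ x ∈ reach c K₀ t}

/-- `x * exp (1 - x) ≤ 1` for `x ≥ 0`. -/
lemma aux_xexp {x : ℝ} (hx : 0 ≤ x) : x * Real.exp (1 - x) ≤ 1 := by
  have h := Real.add_one_le_exp (x - 1)
  have hp : (0:ℝ) < Real.exp (x - 1) := Real.exp_pos _
  have : x ≤ Real.exp (x - 1) := by linarith
  calc x * Real.exp (1 - x) ≤ Real.exp (x - 1) * Real.exp (1 - x) := by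
        apply mul_le_mul_of_nonneg_right this (Real.exp_nonneg _)
    _ = 1 := by rw [← Real.exp_add]; norm_num

/-- `x ≤ exp (x / 2)` for `x ≥ 0`. -/
lemma aux_xexp2 {x : ℝ} (hx : 0 ≤ x) : x ≤ Real.exp (x / 2) := by
  have h := Real.add_one_le_exp (x / 4)
  have h2 : Real.exp (x / 2) = Real.exp (x / 4) * Real.exp (x / 4) := by
    rw [← Real.exp_add]; ring_nf
  nlinarith [sq_nonneg (x / 4 - 1), Real.exp_pos (x / 4)]

/-- `x ↦ x * exp (1 - x)` is antitone on `[1, ∞)`. -/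
lemma aux_anti {a b : ℝ} (ha : 1 ≤ a) (hab : a ≤ b) :
    b * Real.exp (1 - b) ≤ a * Real.exp (1 - a) := by
  have hanti : AntitoneOn (fun x : ℝ => x * Real.exp (1 - x)) (Set.Ici 1) := by
    have hd : ∀ x ∈ interior (Set.Ici (1:ℝ)),
        HasDerivAt (fun x : ℝ => x * Real.exp (1 - x)) ((1 - x) * Real.exp (1 - x)) x := by
      intro x hx
      have h1 : HasDerivAt (fun x : ℝ => 1 - x) (-1) x := by
        simpa using (hasDerivAt_id x).const_sub 1
      have h2 : HasDerivAt (fun x : ℝ => Real.exp (1 - x)) (Real.exp (1 - x) * (-1)) x :=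
        h1.exp
      have h3 := (hasDerivAt_id x).mul h2
      refine h3.congr_deriv ?_
      simp; ring
    apply antitoneOn_of_deriv_nonpos (convex_Ici 1)
    · exact (continuous_id.mul ((continuous_const.sub continuous_id).rexp)).continuousOn
    · intro x hx
      exact (hd x hx).differentiableAt.differentiableWithinAt
    · intro x hx
      rw [(hd x hx).deriv]
      rw [interior_Ici] at hx
      have : (1:ℝ) < x := hx
      nlinarith [Real.exp_pos (1 - x)]
  exact hanti (by exact ha) (le_trans ha hab) hab

/-- `m ↦ m * (1 - log m)` is monotone on `(0, 1]`. -/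
lemma aux_gmono {a b : ℝ} (ha : 0 < a) (hab : a ≤ b) (hb : b ≤ 1) :
    a * (1 - Real.log a) ≤ b * (1 - Real.log b) := by
  have hbpos : 0 < b := lt_of_lt_of_le ha hab
  set la := 1 - Real.log a with hla
  set lb := 1 - Real.log b with hlb
  have h1 : 1 ≤ lb := by
    have := Real.log_nonpos (le_of_lt hbpos) hb
    simp [hlb]; linarith
  have h2 : lb ≤ la := by
    have := Real.log_le_log ha hab
    simp [hla, hlb]; linarith
  have key := aux_anti h1 h2
  have ea : Real.exp (1 - la) = a := by
    rw [hla]; ring_nf; rw [Real.exp_log ha]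
  have eb : Real.exp (1 - lb) = b := by
    rw [hlb]; ring_nf; rw [Real.exp_log hbpos]
  calc a * (1 - Real.log a) = la * Real.exp (1 - la) := by rw [ea]; ring
    _ ≤ lb * Real.exp (1 - lb) := key
    _ = b * (1 - Real.log b) := by rw [eb]; ring


variable {N : ℕ} {c : EuclideanSpace ℝ (Fin N) → ℝ → ℝ} {T A B : ℝ}

lemma intervalIntegrable_smul_cont {f : ℝ → EuclideanSpace ℝ (Fin N)} {g : ℝ → ℝ} {a b : ℝ}
    (hf : IntervalIntegrable f volume a b) (hg : Continuous g) :
    IntervalIntegrable (fun s => g s • f s) volume a b := by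
  rw [intervalIntegrable_iff] at hf ⊢
  have h1 : IntegrableOn f (Set.Icc (min a b) (max a b)) volume := by
    rwa [integrableOn_Icc_iff_integrableOn_Ioc]
  have h2 := h1.continuousOn_smul hg.continuousOn isCompact_Icc
  exact h2.mono_set Set.Ioc_subset_Icc_self

lemma adm_const (hA : 0 < A)
    (hV1 : ∀ x, ∀ t ∈ Set.Icc (0:ℝ) T, A ≤ c x t ∧ c x t ≤ B)
    {t : ℝ} (ht : t ∈ Set.Icc (0:ℝ) T) (x : EuclideanSpace ℝ (Fin N)) :
    AdmTraj c t (fun _ => x) (fun _ => 0) := by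
  refine ⟨intervalIntegrable_const, fun s _ => by simp, .of_forall fun s hs => ?_⟩
  have := (hV1 x s ⟨hs.1, le_trans hs.2 ht.2⟩).1
  simp only [norm_zero]; linarith

lemma adm_restrict {t s : ℝ} {X X' : ℝ → EuclideanSpace ℝ (Fin N)}
    (h : AdmTraj c t X X') (hs : s ∈ Set.Icc (0:ℝ) t) : AdmTraj c s X X' := by
  refine ⟨h.1.mono_set ?_, fun r hr => h.2.1 r ⟨hr.1, hr.2.trans hs.2⟩,
    h.2.2.mono fun r hr hmem => hr ⟨hmem.1, hmem.2.trans hs.2⟩⟩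
  rw [Set.uIcc_of_le hs.1, Set.uIcc_of_le (hs.1.trans hs.2)]
  exact Set.Icc_subset_Icc le_rfl hs.2

lemma adm_speed_bound (hV1 : ∀ x, ∀ t ∈ Set.Icc (0:ℝ) T, A ≤ c x t ∧ c x t ≤ B)
    {t : ℝ} (ht : t ∈ Set.Icc (0:ℝ) T) {X X' : ℝ → EuclideanSpace ℝ (Fin N)}
    (h : AdmTraj c t X X') :
    ∀ᵐ r ∂volume, r ∈ Set.Icc (0:ℝ) t → ‖X' r‖ ≤ B := by
  filter_upwards [h.2.2] with r hr hmem
  exact (hr hmem).trans (hV1 (X r) r ⟨hmem.1, hmem.2.trans ht.2⟩).2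

lemma sub_uIcc {a b t : ℝ} (h0 : 0 ≤ a) (hab : a ≤ b) (hbt : b ≤ t) :
    Set.uIcc a b ⊆ Set.uIcc 0 t := by
  rw [Set.uIcc_of_le hab, Set.uIcc_of_le ((h0.trans hab).trans hbt)]
  exact Set.Icc_subset_Icc h0 hbt

lemma adm_displacement (hV1 : ∀ x, ∀ t ∈ Set.Icc (0:ℝ) T, A ≤ c x t ∧ c x t ≤ B)
    {t : ℝ} (ht : t ∈ Set.Icc (0:ℝ) T) {X X' : ℝ → EuclideanSpace ℝ (Fin N)}
    (h : AdmTraj c t X X') {r s : ℝ} (hr : 0 ≤ r) (hrs : r ≤ s) (hst : s ≤ t) :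
    ‖X s - X r‖ ≤ B * (s - r) := by
  have hs0 : (0:ℝ) ≤ s := hr.trans hrs
  have e1 := h.2.1 s ⟨hs0, hst⟩
  have e2 := h.2.1 r ⟨hr, hrs.trans hst⟩
  have key : X s - X r = ∫ ρ in r..s, X' ρ := by
    rw [e1, e2, add_sub_add_left_eq_sub]
    exact integral_interval_sub_left (h.1.mono_set (sub_uIcc le_rfl hs0 hst))
      (h.1.mono_set (sub_uIcc le_rfl hr (hrs.trans hst)))
  rw [key]
  have hb := adm_speed_bound hV1 ht h
  have : ‖∫ ρ in r..s, X' ρ‖ ≤ B * |s - r| := by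
    apply intervalIntegral.norm_integral_le_of_norm_le_const_ae
    filter_upwards [hb] with ρ hρ hmem
    rw [Set.uIoc_of_le hrs] at hmem
    exact hρ ⟨hr.trans (le_of_lt hmem.1), hmem.2.trans hst⟩
  rwa [abs_of_nonneg (by linarith)] at this


lemma adm_wait (hA : 0 < A)
    (hV1 : ∀ x, ∀ t ∈ Set.Icc (0:ℝ) T, A ≤ c x t ∧ c x t ≤ B)
    {t s : ℝ} (ht : t ∈ Set.Icc (0:ℝ) T) (hs : s ∈ Set.Icc (0:ℝ) t)
    {X X' : ℝ → EuclideanSpace ℝ (Fin N)} (h : AdmTraj c s X X') :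
    ∃ Z Z', AdmTraj c t Z Z' ∧ Z 0 = X 0 ∧ Z t = X s := by
  classical
  set Z : ℝ → EuclideanSpace ℝ (Fin N) := fun r => if r ≤ s then X r else X s with hZ
  set Z' : ℝ → EuclideanSpace ℝ (Fin N) := fun r => if r ≤ s then X' r else 0 with hZ'
  have hs0 : (0:ℝ) ≤ s := hs.1
  have hst : s ≤ t := hs.2
  have ht0 : (0:ℝ) ≤ t := hs0.trans hst
  have i1 : IntegrableOn Z' (Set.Ioc 0 s) volume := by
    have := h.1.def'
    rw [Set.uIoc_of_le hs0] at this
    exact this.congr_fun (fun r hr => by simp [hZ', hr.2]) measurableSet_Ioc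
  have i2 : IntegrableOn Z' (Set.Ioc s t) volume := by
    exact (integrableOn_zero).congr_fun (fun r hr => by simp [hZ', not_le.2 hr.1]) measurableSet_Ioc
  have iZ' : IntervalIntegrable Z' volume 0 t := by
    rw [intervalIntegrable_iff, Set.uIoc_of_le ht0, ← Set.Ioc_union_Ioc_eq_Ioc hs0 hst]
    exact i1.union i2
  have iZ's : IntervalIntegrable Z' volume 0 s := by
    rw [intervalIntegrable_iff, Set.uIoc_of_le hs0]; exact i1
  have e0s : ∫ r in (0:ℝ)..s, Z' r = ∫ r in (0:ℝ)..s, X' r := by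
    apply intervalIntegral.integral_congr_ae
    refine .of_forall fun r hr => ?_
    rw [Set.uIoc_of_le hs0] at hr
    simp [hZ', hr.2]
  refine ⟨Z, Z', ⟨iZ', fun r hr => ?_, ?_⟩, by simp [hZ, hs0], by
    by_cases hc : t ≤ s
    · simp [hZ, hc, le_antisymm hc hst]
    · simp [hZ, hc]⟩
  · by_cases hc : r ≤ s
    · have : Z r = X r := by simp [hZ, hc]
      rw [this]
      have : Z 0 = X 0 := by simp [hZ, hs0]
      rw [this, h.2.1 r ⟨hr.1, hc⟩]
      congr 1
      symm
      apply intervalIntegral.integral_congr_ae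
      refine .of_forall fun ρ hρ => ?_
      rw [Set.uIoc_of_le hr.1] at hρ
      simp [hZ', hρ.2.trans hc]
    · push_neg at hc
      have hZr : Z r = X s := by simp [hZ, not_le.2 hc]
      have hZ0 : Z 0 = X 0 := by simp [hZ, hs0]
      have hsplit : ∫ ρ in (0:ℝ)..r, Z' ρ = (∫ ρ in (0:ℝ)..s, Z' ρ) + ∫ ρ in s..r, Z' ρ :=
        (intervalIntegral.integral_add_adjacent_intervals iZ's
          (iZ'.mono_set (sub_uIcc hs0 hc.le hr.2))).symm
      have ezero : ∫ ρ in s..r, Z' ρ = 0 := by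
        rw [intervalIntegral.integral_congr_ae (g := fun _ => (0:EuclideanSpace ℝ (Fin N)))
          (.of_forall fun ρ hρ => ?_)]
        · simp
        · rw [Set.uIoc_of_le hc.le] at hρ
          simp [hZ', not_le.2 hρ.1]
      rw [hZr, hZ0, hsplit, ezero, e0s, add_zero, ← h.2.1 s ⟨hs0, le_rfl⟩]
  · filter_upwards [h.2.2] with r hr hmem
    by_cases hc : r ≤ s
    · simpa [hZ, hZ', hc] using hr ⟨hmem.1, hc⟩
    · have := (hV1 (X s) r ⟨hmem.1, hmem.2.trans ht.2⟩).1
      simp only [hZ, hZ', if_neg hc, norm_zero]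
      linarith


lemma adm_spatial {Cp : ℝ} (hA : 0 < A) (hAB : A ≤ B) (hCp : 0 < Cp)
    (hV1 : ∀ x, ∀ t ∈ Set.Icc (0:ℝ) T, A ≤ c x t ∧ c x t ≤ B)
    (hV2 : ∀ x y, ∀ t ∈ Set.Icc (0:ℝ) T,
      |c x t - c y t| ≤ Cp * ‖x - y‖ * (1 + |Real.log ‖x - y‖|))
    {t : ℝ} (ht : t ∈ Set.Icc (0:ℝ) T) {x y : EuclideanSpace ℝ (Fin N)}
    (hd : 0 < ‖x - y‖)
    (hd0 : ‖x - y‖ ≤ Real.exp (1 - (2 + 2 * |Real.log (A / Cp)|) / Real.exp (-(B * Cp / A) * T)))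
    {X X' : ℝ → EuclideanSpace ℝ (Fin N)} (hX : AdmTraj c t X X') (hXt : X t = x) :
    ∃ Z Z', AdmTraj c t Z Z' ∧ Z t = y ∧
      ‖Z 0 - X 0‖ ≤
        Real.exp (1 - (1 - Real.log ‖x - y‖) * Real.exp (-(B * Cp / A) * T)) := by
  classical
  have hB : 0 < B := lt_of_lt_of_le hA hAB
  set d : ℝ := ‖x - y‖ with hdd
  set K : ℝ := B * Cp / A with hKdef
  have hK : 0 < K := by positivity
  set E0 : ℝ := Real.exp (-K * T) with hE0def
  have hE0 : 0 < E0 := Real.exp_pos _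
  have hT0 : 0 ≤ T := ht.1.trans ht.2
  have hE0le1 : E0 ≤ 1 := Real.exp_le_one_iff.2 (by nlinarith)
  set lstar : ℝ := 2 + 2 * |Real.log (A / Cp)| with hlstardef
  have hlstar2 : 2 ≤ lstar := by
    have h := abs_nonneg (Real.log (A / Cp))
    rw [hlstardef]; linarith
  have h1ld : lstar / E0 ≤ 1 - Real.log d := by
    have := Real.log_le_log hd hd0
    rw [Real.log_exp] at this
    linarith
  have hldpos : 0 < 1 - Real.log d := lt_of_lt_of_le (by positivity) h1ld
  set l : ℝ → ℝ := fun s => (1 - Real.log d) * Real.exp (-K * (t - s)) with hldef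
  clear_value l
  set ρ : ℝ → ℝ := fun s => Real.exp (1 - l s) with hρdef
  clear_value ρ
  set δ : ℝ → ℝ := fun s => (Cp / A) * (ρ s * l s) with hδdef
  clear_value δ
  have hlpos : ∀ s, 0 < l s := fun s => by simp only [hldef]; positivity
  have hρpos : ∀ s, 0 < ρ s := fun s => by simp only [hρdef]; exact Real.exp_pos _
  have hlb : ∀ s ∈ Set.Icc (0:ℝ) t, lstar ≤ l s := by
    intro s hs
    have h1 : E0 ≤ Real.exp (-K * (t - s)) := by
      apply Real.exp_le_exp.2
      nlinarith [hs.1, hs.2, ht.2]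
    simp only [hldef]
    calc lstar = (lstar / E0) * E0 := by field_simp
      _ ≤ (1 - Real.log d) * Real.exp (-K * (t - s)) :=
          mul_le_mul h1ld h1 (le_of_lt hE0) (le_of_lt hldpos)
  have hlle : ∀ s ∈ Set.Icc (0:ℝ) t, l s ≤ 1 - Real.log d := by
    intro s hs
    have h1 : Real.exp (-K * (t - s)) ≤ 1 := Real.exp_le_one_iff.2 (by nlinarith [hs.2])
    simp only [hldef]
    calc (1 - Real.log d) * Real.exp (-K * (t - s)) ≤ (1 - Real.log d) * 1 := mul_le_mul_of_nonneg_left h1 (le_of_lt hldpos)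
      _ = 1 - Real.log d := mul_one _
  have hρle1 : ∀ s ∈ Set.Icc (0:ℝ) t, ρ s ≤ 1 := by
    intro s hs
    simp only [hρdef]
    exact Real.exp_le_one_iff.2 (by have := hlb s hs; linarith)
  have hρged : ∀ s ∈ Set.Icc (0:ℝ) t, d ≤ ρ s := by
    intro s hs
    have : Real.exp (1 - (1 - Real.log d)) ≤ ρ s := by
      simp only [hρdef]
      exact Real.exp_le_exp.2 (by have := hlle s hs; linarith)
    calc d = Real.exp (Real.log d) := (Real.exp_log hd).symm
      _ = Real.exp (1 - (1 - Real.log d)) := by ring_nf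
      _ ≤ ρ s := this
  have hδ0 : ∀ s, 0 ≤ δ s := fun s => by
    simp only [hδdef]
    have := hρpos s
    have := hlpos s
    positivity
  have hδle1 : ∀ s ∈ Set.Icc (0:ℝ) t, δ s ≤ 1 := by
    intro s hs
    have h1 : ρ s * l s ≤ lstar * Real.exp (1 - lstar) := by
      have := aux_anti (by linarith : (1:ℝ) ≤ lstar) (hlb s hs)
      calc ρ s * l s = l s * Real.exp (1 - l s) := by simp only [hρdef]; ring
        _ ≤ lstar * Real.exp (1 - lstar) := this
    have h2 : lstar * Real.exp (1 - lstar) ≤ A / Cp := by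
      have h3 : lstar ≤ Real.exp (lstar / 2) := aux_xexp2 (by linarith)
      have h4 : lstar * Real.exp (1 - lstar) ≤ Real.exp (lstar / 2) * Real.exp (1 - lstar) :=
        mul_le_mul_of_nonneg_right h3 (Real.exp_nonneg _)
      have h5 : Real.exp (lstar / 2) * Real.exp (1 - lstar) = Real.exp (1 - lstar / 2) := by
        rw [← Real.exp_add]; ring_nf
      have h6 : (1 : ℝ) - lstar / 2 = -|Real.log (A / Cp)| := by rw [hlstardef]; ring
      have h7 : Real.exp (1 - lstar / 2) ≤ A / Cp := by
        rw [h6]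
        calc Real.exp (-|Real.log (A / Cp)|) ≤ Real.exp (Real.log (A / Cp)) :=
            Real.exp_le_exp.2 (neg_abs_le _)
          _ = A / Cp := Real.exp_log (by positivity)
      linarith
    calc δ s = (Cp / A) * (ρ s * l s) := by simp only [hδdef]
      _ ≤ (Cp / A) * (A / Cp) := mul_le_mul_of_nonneg_left (h1.trans h2) (by positivity)
      _ = 1 := by field_simp
  have hlcont : Continuous l := by simp only [hldef]; fun_prop
  have hρcont : Continuous ρ := by
    simp only [hρdef]
    exact (continuous_const.sub hlcont).rexp
  have hδcont : Continuous δ := by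
    simp only [hδdef]
    exact continuous_const.mul (hρcont.mul hlcont)
  -- FTC
  have hderiv : ∀ r : ℝ, HasDerivAt ρ (-(K * (l r * ρ r))) r := by
    intro r
    have h1 : HasDerivAt (fun s : ℝ => -K * (t - s)) K r := by
      have := ((hasDerivAt_id r).const_sub t).const_mul (-K)
      exact this.congr_deriv (by ring)
    have h2 := h1.exp
    have h3 := h2.const_mul (1 - Real.log d)
    have h4 : HasDerivAt l ((1 - Real.log d) * (Real.exp (-K * (t - r)) * K)) r := by
      simp only [hldef]; exact h3
    have h5 := (h4.const_sub 1).exp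
    have h6 : HasDerivAt ρ (Real.exp (1 - l r) * -((1 - Real.log d) * (Real.exp (-K * (t - r)) * K))) r := by
      simp only [hρdef]; exact h5
    convert h6 using 1
    simp only [hρdef, hldef]
    ring
  have hFTC : ∀ s ∈ Set.Icc (0:ℝ) t, (∫ r in s..t, K * (l r * ρ r)) = ρ s - d := by
    intro s hs
    have hint : IntervalIntegrable (fun r => -(K * (l r * ρ r))) volume s t :=
      (Continuous.intervalIntegrable ((continuous_const.mul (hlcont.mul hρcont)).neg) s t)
    have := intervalIntegral.integral_eq_sub_of_hasDerivAt (fun r _ => hderiv r) hint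
    have hneg : (∫ r in s..t, -(K * (l r * ρ r))) = -∫ r in s..t, K * (l r * ρ r) :=
      intervalIntegral.integral_neg
    have hlt : l t = 1 - Real.log d := by
      simp only [hldef]
      simp only [sub_self, mul_zero, neg_zero, Real.exp_zero, mul_one]
    have hρt : ρ t = d := by
      simp only [hρdef]
      simp only [hlt]
      rw [show (1:ℝ) - (1 - Real.log d) = Real.log d by ring, Real.exp_log hd]
    rw [hneg] at this
    rw [hρt] at this
    linarith [this]
  -- the perturbed trajectory
  set I : ℝ → EuclideanSpace ℝ (Fin N) := fun s => ∫ r in (0:ℝ)..s, δ r • X' r with hIdef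
  clear_value I
  set Z : ℝ → EuclideanSpace ℝ (Fin N) := fun s => X s + ((y - x) + I t - I s) with hZdef
  clear_value Z
  set Z' : ℝ → EuclideanSpace ℝ (Fin N) := fun s => X' s - δ s • X' s with hZ'def
  clear_value Z'
  have hIδ : IntervalIntegrable (fun r => δ r • X' r) volume 0 t :=
    intervalIntegrable_smul_cont hX.1 hδcont
  have ht0 : (0:ℝ) ≤ t := ht.1
  -- error bound
  have hE : ∀ s ∈ Set.Icc (0:ℝ) t, ‖Z s - X s‖ ≤ ρ s := by
    intro s hs
    have hZX : Z s - X s = (y - x) + ∫ r in s..t, δ r • X' r := by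
      have h1 : I t - I s = ∫ r in s..t, δ r • X' r := by
        simp only [hIdef]
        exact intervalIntegral.integral_interval_sub_left hIδ
          (hIδ.mono_set (sub_uIcc le_rfl hs.1 hs.2))
      rw [hZdef, ← h1]
      beta_reduce
      abel
    have hnorm : ‖∫ r in s..t, δ r • X' r‖ ≤ ρ s - d := by
      have hb := adm_speed_bound hV1 ht hX
      have hbd : ∀ᵐ r ∂volume.restrict (Set.uIoc s t), ‖δ r • X' r‖ ≤ B * δ r := by
        filter_upwards [ae_restrict_of_ae hb, self_mem_ae_restrict measurableSet_uIoc]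
          with r h1 h2
        rw [Set.uIoc_of_le hs.2] at h2
        have hmem : r ∈ Set.Icc (0:ℝ) t := ⟨hs.1.trans (le_of_lt h2.1), h2.2⟩
        rw [norm_smul, Real.norm_eq_abs, abs_of_nonneg (hδ0 r)]
        calc δ r * ‖X' r‖ ≤ δ r * B := mul_le_mul_of_nonneg_left (h1 hmem) (hδ0 r)
          _ = B * δ r := mul_comm _ _
      have hbint : IntervalIntegrable (fun r => B * δ r) volume s t :=
        Continuous.intervalIntegrable (by fun_prop) s t
      have h2 := intervalIntegral.norm_integral_le_abs_of_norm_le hbd hbint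
      have h3 : (∫ r in s..t, B * δ r) = ∫ r in s..t, K * (l r * ρ r) := by
        apply intervalIntegral.integral_congr
        intro r _
        simp only [hδdef, hKdef]
        field_simp
      rw [h3, hFTC s hs] at h2
      rwa [abs_of_nonneg (by have := hρged s hs; linarith)] at h2
    calc ‖Z s - X s‖ ≤ ‖y - x‖ + ‖∫ r in s..t, δ r • X' r‖ := by
          rw [hZX]; exact norm_add_le _ _
      _ ≤ d + (ρ s - d) := by
          have : ‖y - x‖ = d := by rw [hdd, norm_sub_rev]
          linarith [hnorm, this.le, this.ge]
      _ = ρ s := by ring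
  -- Z is admissible
  have hZadm : AdmTraj c t Z Z' := by
    refine ⟨by simp only [hZ'def]; exact hX.1.sub hIδ, ?_, ?_⟩
    · intro s hs
      have h1 : (∫ r in (0:ℝ)..s, Z' r)
          = (∫ r in (0:ℝ)..s, X' r) - I s := by
        simp only [hZ'def, hIdef]
        exact intervalIntegral.integral_sub (hX.1.mono_set (sub_uIcc le_rfl hs.1 hs.2))
          (hIδ.mono_set (sub_uIcc le_rfl hs.1 hs.2))
      have h2 := hX.2.1 s hs
      have hI0 : I 0 = 0 := by simp only [hIdef]; exact intervalIntegral.integral_same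
      simp only [hZdef]
      rw [h1, hI0, h2]
      abel
    · filter_upwards [hX.2.2] with s hsp hmem
      have hρl : 1 - Real.log (ρ s) = l s := by
        simp only [hρdef]
        simp only [Real.log_exp]
        ring
      have hδ1 : δ s ≤ 1 := hδle1 s hmem
      have hδn : 0 ≤ δ s := hδ0 s
      have hsT : s ∈ Set.Icc (0:ℝ) T := ⟨hmem.1, hmem.2.trans ht.2⟩
      have hc1 := hV1 (X s) s hsT
      have hsp' := hsp hmem
      have hZ's : Z' s = (1 - δ s) • X' s := by
        simp only [hZ'def]
        simp only [sub_smul, one_smul]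
      have hnormZ' : ‖Z' s‖ = (1 - δ s) * ‖X' s‖ := by
        rw [hZ's, norm_smul, Real.norm_eq_abs, abs_of_nonneg (by linarith)]
      have hm : ‖X s - Z s‖ ≤ ρ s := by
        rw [norm_sub_rev]; exact hE s hmem
      have hV2s := hV2 (X s) (Z s) s hsT
      have key : Cp * ‖X s - Z s‖ * (1 + |Real.log ‖X s - Z s‖|) ≤ A * δ s := by
        rcases eq_or_lt_of_le (norm_nonneg (X s - Z s)) with h0 | h0
        · rw [← h0]
          have : A * δ s ≥ 0 := by positivity
          simpa using this
        · have hle1 : ‖X s - Z s‖ ≤ 1 := hm.trans (hρle1 s hmem)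
          have hlog : |Real.log ‖X s - Z s‖| = -(Real.log ‖X s - Z s‖) :=
            abs_of_nonpos (Real.log_nonpos (le_of_lt h0) hle1)
          have hg := aux_gmono h0 hm (hρle1 s hmem)
          rw [hρl] at hg
          have hAδ : A * δ s = Cp * (ρ s * l s) := by
            simp only [hδdef]
            field_simp
          rw [hlog, hAδ]
          nlinarith [hg, hCp.le]
      have hcZ : c (X s) s - A * δ s ≤ c (Z s) s := by
        have := abs_sub_le_iff.1 hV2s
        linarith [this.1, key]
      calc ‖Z' s‖ = (1 - δ s) * ‖X' s‖ := hnormZ'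
        _ ≤ (1 - δ s) * c (X s) s := mul_le_mul_of_nonneg_left hsp' (by linarith)
        _ = c (X s) s - δ s * c (X s) s := by ring
        _ ≤ c (X s) s - A * δ s := by nlinarith [hc1.1, hδn]
        _ ≤ c (Z s) s := hcZ
  refine ⟨Z, Z', hZadm, ?_, ?_⟩
  · simp only [hZdef]
    simp only [hXt]
    abel
  · have h0mem : (0:ℝ) ∈ Set.Icc (0:ℝ) t := ⟨le_rfl, ht0⟩
    have h1 := hE 0 h0mem
    have h2 : ρ 0 ≤ Real.exp (1 - (1 - Real.log d) * E0) := by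
      have h3 : E0 ≤ Real.exp (-K * (t - 0)) := Real.exp_le_exp.2 (by nlinarith [ht.2, ht0])
      have h4 : (1 - Real.log d) * E0 ≤ (1 - Real.log d) * Real.exp (-K * (t - 0)) :=
        mul_le_mul_of_nonneg_left h3 (le_of_lt hldpos)
      simp only [hρdef, hldef]
      apply Real.exp_le_exp.2
      linarith
    exact h1.trans h2

def modM (T A B Cp : ℝ) (r : ℝ) : ℝ :=
  Real.exp (1 - (1 - Real.log r) * Real.exp (-(B * Cp / A) * T))

def dZero (T A B Cp : ℝ) : ℝ :=
  Real.exp (1 - (2 + 2 * |Real.log (A / Cp)|) / Real.exp (-(B * Cp / A) * T))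

def modOmega (T A B Cp L : ℝ) (r : ℝ) : ℝ :=
  if r ≤ 0 then 0
  else if r ≤ dZero T A B Cp then L * modM T A B Cp r
  else L * r + B * L * T + L * modM T A B Cp (dZero T A B Cp)

lemma modM_pos (T A B Cp r : ℝ) : 0 < modM T A B Cp r := Real.exp_pos _

lemma dZero_pos (T A B Cp : ℝ) : 0 < dZero T A B Cp := Real.exp_pos _

lemma modM_mono (T A B Cp : ℝ) {a b : ℝ} (ha : 0 < a) (hab : a ≤ b) :
    modM T A B Cp a ≤ modM T A B Cp b := by
  unfold modM
  apply Real.exp_le_exp.2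
  have h1 : Real.log a ≤ Real.log b := Real.log_le_log ha hab
  have h2 : (0:ℝ) < Real.exp (-(B * Cp / A) * T) := Real.exp_pos _
  nlinarith

lemma modOmega_nonneg (T A B Cp L : ℝ) (hL : 0 ≤ L) (hB : 0 ≤ B) (hT : 0 ≤ T) (r : ℝ) :
    0 ≤ modOmega T A B Cp L r := by
  unfold modOmega
  split_ifs with h1 h2
  · exact le_rfl
  · have := modM_pos T A B Cp r; positivity
  · push_neg at h1 h2
    have hM := modM_pos T A B Cp (dZero T A B Cp)
    have hLr : (0:ℝ) ≤ L * r := mul_nonneg hL h1.le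
    nlinarith [mul_nonneg (mul_nonneg hB hL) hT, mul_nonneg hL hM.le]

lemma modOmega_zero (T A B Cp L : ℝ) : modOmega T A B Cp L 0 = 0 := by
  unfold modOmega; simp

lemma modOmega_mono (T A B Cp L : ℝ) (hL : 0 ≤ L) (hB : 0 ≤ B) (hT : 0 ≤ T) :
    MonotoneOn (modOmega T A B Cp L) (Set.Ici 0) := by
  intro a ha b hb hab
  by_cases ha0 : a ≤ 0
  · rw [show modOmega T A B Cp L a = 0 by unfold modOmega; rw [if_pos ha0]]
    exact modOmega_nonneg T A B Cp L hL hB hT b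
  · push_neg at ha0
    have hb0 : ¬ b ≤ 0 := by push_neg; linarith
    by_cases had : a ≤ dZero T A B Cp
    · by_cases hbd : b ≤ dZero T A B Cp
      · rw [show modOmega T A B Cp L a = L * modM T A B Cp a by
          unfold modOmega; rw [if_neg (not_le.2 ha0), if_pos had]]
        rw [show modOmega T A B Cp L b = L * modM T A B Cp b by
          unfold modOmega; rw [if_neg hb0, if_pos hbd]]
        exact mul_le_mul_of_nonneg_left (modM_mono T A B Cp ha0 hab) hL
      · rw [show modOmega T A B Cp L a = L * modM T A B Cp a by
          unfold modOmega; rw [if_neg (not_le.2 ha0), if_pos had]]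
        rw [show modOmega T A B Cp L b
            = L * b + B * L * T + L * modM T A B Cp (dZero T A B Cp) by
          unfold modOmega; rw [if_neg hb0, if_neg hbd]]
        have h1 : L * modM T A B Cp a ≤ L * modM T A B Cp (dZero T A B Cp) :=
          mul_le_mul_of_nonneg_left (modM_mono T A B Cp ha0 had) hL
        push_neg at hbd
        have hbpos : (0:ℝ) < b := ha0.trans_le hab
        nlinarith [mul_nonneg (mul_nonneg hB hL) hT, mul_nonneg hL hbpos.le]
    · have hbd : ¬ b ≤ dZero T A B Cp := by push_neg at had ⊢; linarith
      rw [show modOmega T A B Cp L a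
          = L * a + B * L * T + L * modM T A B Cp (dZero T A B Cp) by
        unfold modOmega; rw [if_neg (not_le.2 ha0), if_neg had]]
      rw [show modOmega T A B Cp L b
          = L * b + B * L * T + L * modM T A B Cp (dZero T A B Cp) by
        unfold modOmega; rw [if_neg hb0, if_neg hbd]]
      nlinarith

lemma modOmega_contWithinAt (T A B Cp L : ℝ) (hL : 0 ≤ L) :
    ContinuousWithinAt (modOmega T A B Cp L) (Set.Ici 0) 0 := by
  rw [Metric.continuousWithinAt_iff]
  intro ε hε
  -- L * modM r → 0 as r → 0+
  set E0 : ℝ := Real.exp (-(B * Cp / A) * T) with hE0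
  have hE0pos : 0 < E0 := Real.exp_pos _
  have htend : Filter.Tendsto (fun r => L * modM T A B Cp r) (nhdsWithin 0 (Set.Ioi 0))
      (nhds 0) := by
    have h1 : Filter.Tendsto Real.log (nhdsWithin 0 (Set.Ioi 0)) Filter.atBot :=
      Real.tendsto_log_nhdsGT_zero
    have h2 : Filter.Tendsto (fun r => 1 - (1 - Real.log r) * E0)
        (nhdsWithin 0 (Set.Ioi 0)) Filter.atBot := by
      apply Filter.tendsto_atBot_add_const_left
      rw [show (fun r => -((1 - Real.log r) * E0)) = (fun r => (Real.log r - 1) * E0) by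
        funext r; ring]
      exact Filter.Tendsto.atBot_mul_const hE0pos
        (Filter.tendsto_atBot_add_const_right _ _ h1)
    have h3 : Filter.Tendsto (fun r => modM T A B Cp r) (nhdsWithin 0 (Set.Ioi 0))
        (nhds 0) := Real.tendsto_exp_atBot.comp h2
    have := h3.const_mul L
    simpa using this
  rw [Metric.tendsto_nhdsWithin_nhds] at htend
  obtain ⟨η, hη, hh⟩ := htend ε hε
  refine ⟨min η (dZero T A B Cp), lt_min hη (dZero_pos T A B Cp), ?_⟩
  intro r hr hrd
  rw [modOmega_zero]
  by_cases hr0 : r ≤ 0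
  · have : r = 0 := le_antisymm hr0 hr
    simp [this, modOmega_zero, hε]
  · push_neg at hr0
    have hrabs : r < min η (dZero T A B Cp) := by
      have : dist r 0 = r := by rw [Real.dist_eq, sub_zero, abs_of_pos hr0]
      rwa [this] at hrd
    have hrd₀ : r ≤ dZero T A B Cp := le_of_lt (lt_of_lt_of_le hrabs (min_le_right _ _))
    have hrη : dist r 0 < η := lt_of_lt_of_le hrd (min_le_left _ _)
    have := hh (Set.mem_Ioi.2 hr0) hrη
    rw [show modOmega T A B Cp L r = L * modM T A B Cp r by
      unfold modOmega; rw [if_neg (not_le.2 hr0), if_pos hrd₀]]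
    simpa using this

/-- the value function
`u(x,t) = sup { u₀(y) : ∃ admissible trajectory from y at time 0 to x at time t }`
is uniformly continuous, nondecreasing in time, satisfies
`u₀(x) ≤ u(x,t) ≤ u₀(x) + B‖Du₀‖_∞ t`, and its space modulus of continuity depends only
on the Lipschitz constant `L` of `u₀` and the constant `Cp` of (V2). -/
theorem stmt2 (N : ℕ) (T A B Cp L : ℝ) (hT : 0 < T) (hA : 0 < A) (hAB : A ≤ B)
    (hCp : 0 < Cp) (hL : 0 ≤ L) :
    ∃ ω : ℝ → ℝ, (∀ r, 0 ≤ ω r) ∧ MonotoneOn ω (Set.Ici 0) ∧ ω 0 = 0 ∧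
      ContinuousWithinAt ω (Set.Ici 0) 0 ∧
      ∀ (c : EuclideanSpace ℝ (Fin N) → ℝ → ℝ)
        (u₀ : EuclideanSpace ℝ (Fin N) → ℝ) (u : EuclideanSpace ℝ (Fin N) → ℝ → ℝ),
        (Measurable fun q : EuclideanSpace ℝ (Fin N) × ℝ => c q.1 q.2) →
        (∀ x, ∀ t ∈ Set.Icc (0 : ℝ) T, A ≤ c x t ∧ c x t ≤ B) →
        (∀ x y, ∀ t ∈ Set.Icc (0 : ℝ) T,
          |c x t - c y t| ≤ Cp * ‖x - y‖ * (1 + |Real.log ‖x - y‖|)) →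
        (∃ Mu, ∀ x, |u₀ x| ≤ Mu) →
        LipschitzWith (Real.toNNReal L) u₀ →
        (∀ x t, u x t =
          sSup (u₀ '' {y | ∃ X X', AdmTraj c t X X' ∧ X 0 = y ∧ X t = x})) →
        UniformContinuousOn (fun q : EuclideanSpace ℝ (Fin N) × ℝ => u q.1 q.2)
            (Set.univ ×ˢ Set.Icc (0 : ℝ) T) ∧
          (∀ x, MonotoneOn (u x) (Set.Icc (0 : ℝ) T)) ∧
          (∀ x, ∀ t ∈ Set.Icc (0 : ℝ) T, u₀ x ≤ u x t ∧ u x t ≤ u₀ x + B * L * t) ∧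
          (∀ x y, ∀ t ∈ Set.Icc (0 : ℝ) T, |u x t - u y t| ≤ ω ‖x - y‖) := by
  have hB : 0 < B := lt_of_lt_of_le hA hAB
  refine ⟨modOmega T A B Cp L, modOmega_nonneg T A B Cp L hL hB.le hT.le,
    modOmega_mono T A B Cp L hL hB.le hT.le, modOmega_zero T A B Cp L,
    modOmega_contWithinAt T A B Cp L hL, ?_⟩
  intro c u₀ u _hmeas hV1 hV2 _hMu hLip hu
  set S : EuclideanSpace ℝ (Fin N) → ℝ → Set (EuclideanSpace ℝ (Fin N)) :=
    fun x t => {y | ∃ X X', AdmTraj c t X X' ∧ X 0 = y ∧ X t = x} with hSdef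
  have hLipR : ∀ a b, u₀ a ≤ u₀ b + L * ‖a - b‖ := by
    intro a b
    have h := hLip.dist_le_mul a b
    rw [Real.dist_eq, Real.coe_toNNReal L hL, dist_eq_norm] at h
    linarith [(abs_sub_le_iff.1 h).1]
  have hself : ∀ x t, t ∈ Set.Icc (0:ℝ) T → x ∈ S x t := fun x t ht =>
    ⟨fun _ => x, fun _ => 0, adm_const hA hV1 ht x, rfl, rfl⟩
  have hne : ∀ x t, t ∈ Set.Icc (0:ℝ) T → (u₀ '' S x t).Nonempty :=
    fun x t ht => ⟨u₀ x, x, hself x t ht, rfl⟩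
  have hub : ∀ x t, t ∈ Set.Icc (0:ℝ) T → ∀ a ∈ u₀ '' S x t, a ≤ u₀ x + L * (B * t) := by
    rintro x t ht a ⟨z, ⟨X, X', hX, hX0, hXt⟩, rfl⟩
    have hdisp : ‖X t - X 0‖ ≤ B * (t - 0) := adm_displacement hV1 ht hX le_rfl ht.1 le_rfl
    have h2 : ‖z - x‖ ≤ B * t := by
      rw [← hX0, ← hXt, norm_sub_rev]
      simpa using hdisp
    have h3 := hLipR z x
    nlinarith
  have hbdd : ∀ x t, t ∈ Set.Icc (0:ℝ) T → BddAbove (u₀ '' S x t) :=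
    fun x t ht => ⟨_, fun a ha => hub x t ht a ha⟩
  have hlow : ∀ x t, t ∈ Set.Icc (0:ℝ) T → u₀ x ≤ u x t := by
    intro x t ht
    rw [hu]
    exact le_csSup (hbdd x t ht) ⟨x, hself x t ht, rfl⟩
  have hupp : ∀ x t, t ∈ Set.Icc (0:ℝ) T → u x t ≤ u₀ x + B * L * t := by
    intro x t ht
    rw [hu]
    apply csSup_le (hne x t ht)
    intro a ha
    have := hub x t ht a ha
    nlinarith
  have hmono : ∀ x, MonotoneOn (u x) (Set.Icc (0:ℝ) T) := by
    intro x s hs t ht hst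
    rw [hu, hu]
    apply csSup_le_csSup (hbdd x t ht) (hne x s hs)
    apply Set.image_mono
    rintro z ⟨X, X', hX, hX0, hXt⟩
    obtain ⟨Z, Z', hZ, hZ0, hZt⟩ := adm_wait hA hV1 ht ⟨hs.1, hst⟩ hX
    exact ⟨Z, Z', hZ, by rw [hZ0, hX0], by rw [hZt, hXt]⟩
  have hspatial : ∀ x y t, t ∈ Set.Icc (0:ℝ) T → 0 < ‖x - y‖ →
      ‖x - y‖ ≤ dZero T A B Cp → u x t ≤ u y t + L * modM T A B Cp ‖x - y‖ := by
    intro x y t ht hd hd0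
    rw [hu x t]
    apply csSup_le (hne x t ht)
    rintro a ⟨z, ⟨X, X', hX, hX0, hXt⟩, rfl⟩
    obtain ⟨Z, Z', hZ, hZt, hZ0⟩ :=
      adm_spatial hA hAB hCp hV1 hV2 ht hd (by rw [dZero] at hd0; exact hd0) hX hXt
    have h1 : u₀ (Z 0) ≤ u y t := by
      rw [hu y t]
      exact le_csSup (hbdd y t ht) ⟨Z 0, ⟨Z, Z', hZ, rfl, hZt⟩, rfl⟩
    have h2 : u₀ z ≤ u₀ (Z 0) + L * ‖z - Z 0‖ := hLipR z (Z 0)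
    have h3 : ‖z - Z 0‖ ≤ modM T A B Cp ‖x - y‖ := by
      rw [← hX0, norm_sub_rev]
      exact hZ0
    nlinarith [mul_le_mul_of_nonneg_left h3 hL]
  have hspatial4 : ∀ x y t, t ∈ Set.Icc (0:ℝ) T →
      |u x t - u y t| ≤ modOmega T A B Cp L ‖x - y‖ := by
    intro x y t ht
    rcases eq_or_lt_of_le (norm_nonneg (x - y)) with h0 | h0
    · have hxy : x = y := by
        rw [← sub_eq_zero]
        exact norm_eq_zero.1 h0.symm
      rw [hxy, sub_self, abs_zero]
      exact modOmega_nonneg T A B Cp L hL hB.le hT.le _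
    · by_cases hd0 : ‖x - y‖ ≤ dZero T A B Cp
      · have hxy := hspatial x y t ht h0 hd0
        have hyx := hspatial y x t ht (by rwa [norm_sub_rev]) (by rwa [norm_sub_rev])
        rw [show ‖y - x‖ = ‖x - y‖ from norm_sub_rev y x] at hyx
        have hω : modOmega T A B Cp L ‖x - y‖ = L * modM T A B Cp ‖x - y‖ := by
          unfold modOmega
          rw [if_neg (not_le.2 h0), if_pos hd0]
        rw [abs_sub_le_iff, hω]
        exact ⟨by linarith, by linarith⟩
      · push_neg at hd0
        have h1 := hupp x t ht
        have h2 := hlow x t ht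
        have h3 := hupp y t ht
        have h4 := hlow y t ht
        have h5 := hLipR x y
        have h6 : u₀ y ≤ u₀ x + L * ‖x - y‖ := by
          have := hLipR y x
          rwa [show ‖y - x‖ = ‖x - y‖ from norm_sub_rev y x] at this
        have hω : modOmega T A B Cp L ‖x - y‖
            = L * ‖x - y‖ + B * L * T + L * modM T A B Cp (dZero T A B Cp) := by
          unfold modOmega
          rw [if_neg (not_le.2 h0), if_neg (not_le.2 hd0)]
        have hBLt : B * L * t ≤ B * L * T :=
          mul_le_mul_of_nonneg_left ht.2 (by positivity)
        have hM : (0:ℝ) ≤ L * modM T A B Cp (dZero T A B Cp) :=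
          mul_nonneg hL (modM_pos T A B Cp _).le
        have hBLt0 : (0:ℝ) ≤ B * L * t := by
          have := ht.1; positivity
        rw [abs_sub_le_iff, hω]
        constructor <;> linarith
  have htime : ∀ y s t, s ∈ Set.Icc (0:ℝ) T → t ∈ Set.Icc (0:ℝ) T → s ≤ t →
      u y t ≤ u y s + modOmega T A B Cp L (B * (t - s)) := by
    intro y s t hs htt hst
    rw [hu y t]
    apply csSup_le (hne y t htt)
    rintro a ⟨z, ⟨X, X', hX, hX0, hXt⟩, rfl⟩
    have hres : AdmTraj c s X X' := adm_restrict hX ⟨hs.1, hst⟩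
    have h1 : u₀ z ≤ u (X s) s := by
      rw [hu]
      exact le_csSup (hbdd (X s) s hs) ⟨z, ⟨X, X', hres, hX0, rfl⟩, rfl⟩
    have h2 := hspatial4 (X s) y s hs
    have h3 : ‖X s - y‖ ≤ B * (t - s) := by
      rw [← hXt, norm_sub_rev]
      exact adm_displacement hV1 htt hX hs.1 hst le_rfl
    have h4 : modOmega T A B Cp L ‖X s - y‖ ≤ modOmega T A B Cp L (B * (t - s)) :=
      modOmega_mono T A B Cp L hL hB.le hT.le (norm_nonneg _)
        (Set.mem_Ici.2 (mul_nonneg hB.le (sub_nonneg.2 hst))) h3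
    linarith [(abs_sub_le_iff.1 h2).1]
  refine ⟨?_, hmono, fun x t ht => ⟨hlow x t ht, hupp x t ht⟩,
    fun x y t ht => hspatial4 x y t ht⟩
  rw [Metric.uniformContinuousOn_iff]
  intro ε hε
  have hcont := modOmega_contWithinAt T A B Cp L hL
  rw [Metric.continuousWithinAt_iff] at hcont
  obtain ⟨η, hη, hcont⟩ := hcont (ε / 3) (by linarith)
  refine ⟨min η (η / B), by positivity, ?_⟩
  rintro ⟨x, t⟩ ⟨-, ht⟩ ⟨y, s⟩ ⟨-, hs⟩ hdist
  rw [Prod.dist_eq] at hdist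
  simp only [max_lt_iff] at hdist
  obtain ⟨hdxy, hdts⟩ := hdist
  have hωxy : modOmega T A B Cp L ‖x - y‖ < ε / 3 := by
    have hmem : ‖x - y‖ ∈ Set.Ici (0:ℝ) := norm_nonneg _
    have hdd : dist ‖x - y‖ 0 < η := by
      rw [Real.dist_eq, sub_zero, abs_of_nonneg (norm_nonneg _)]
      calc ‖x - y‖ = dist x y := (dist_eq_norm x y).symm
        _ < min η (η / B) := hdxy
        _ ≤ η := min_le_left _ _
    have := hcont hmem hdd
    rw [modOmega_zero, Real.dist_eq, sub_zero] at this
    exact lt_of_le_of_lt (le_abs_self _) this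
  have hωts : modOmega T A B Cp L (B * |t - s|) < ε / 3 := by
    have hmem : B * |t - s| ∈ Set.Ici (0:ℝ) := by
      have := abs_nonneg (t - s); simp only [Set.mem_Ici]; positivity
    have hdd : dist (B * |t - s|) 0 < η := by
      rw [Real.dist_eq, sub_zero, abs_of_nonneg (by positivity : (0:ℝ) ≤ B * |t - s|)]
      have h1 : |t - s| < η / B := by
        calc |t - s| = dist t s := (Real.dist_eq t s).symm
          _ < min η (η / B) := hdts
          _ ≤ η / B := min_le_right _ _
      calc B * |t - s| < B * (η / B) := by
            exact mul_lt_mul_of_pos_left h1 hB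
        _ = η := by field_simp
    have := hcont hmem hdd
    rw [modOmega_zero, Real.dist_eq, sub_zero] at this
    exact lt_of_le_of_lt (le_abs_self _) this
  have habs : |u y t - u y s| ≤ modOmega T A B Cp L (B * |t - s|) := by
    rcases le_total s t with h | h
    · have ha := htime y s t hs ht h
      have hb := hmono y hs ht h
      rw [abs_of_nonneg (by linarith), abs_of_nonneg (by linarith : (0:ℝ) ≤ t - s)]
      linarith
    · have ha := htime y t s ht hs h
      have hb := hmono y ht hs h
      rw [abs_of_nonpos (by linarith), abs_of_nonpos (by linarith : t - s ≤ 0)]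
      have : B * -(t - s) = B * (s - t) := by ring
      rw [this]
      linarith
  have hfinal : |u x t - u y s| ≤ |u x t - u y t| + |u y t - u y s| := abs_sub_le _ _ _
  have h2 := hspatial4 x y t ht
  rw [Real.dist_eq]
  calc |u x t - u y s| ≤ |u x t - u y t| + |u y t - u y s| := hfinal
    _ ≤ modOmega T A B Cp L ‖x - y‖ + modOmega T A B Cp L (B * |t - s|) := by
        exact add_le_add h2 habs
    _ < ε / 3 + ε / 3 := by linarith
    _ < ε := by linarith
end
end

section
/- Let c be a velocity satisfying (V1) and (V2), K₀ ⊂ ℝ^N compact, and let K(t), z be the associated reachable sets and minimal time function. If x̄ is an extremal trajectory on [0,t], then z(x̄(s)) = s for every s ∈ [0,t]. -/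
open MeasureTheory Set Metric

noncomputable section

/-- An interval integrable function times a continuous scalar function is interval
integrable. -/
lemma smul_intervalIntegrable {N : ℕ} {f : ℝ → ℝ} (hf : Continuous f)
    {g : ℝ → EuclideanSpace ℝ (Fin N)} {a b : ℝ} (hab : a ≤ b)
    (hg : IntervalIntegrable g volume a b) :
    IntervalIntegrable (fun x => f x • g x) volume a b := by
  rw [intervalIntegrable_iff_integrableOn_Ioc_of_le hab] at hg ⊢
  rw [← integrableOn_Icc_iff_integrableOn_Ioc] at hg ⊢
  exact hg.continuousOn_smul hf.continuousOn isCompact_Icc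

/-- Monotonicity of the Osgood modulus `u ↦ u (1 + |log u|)` on `[0,1]`. -/
lemma omega_mono_s3 {u v : ℝ} (hu : 0 ≤ u) (huv : u ≤ v) (hv : v ≤ 1) :
    u * (1 + |Real.log u|) ≤ v * (1 - Real.log v) := by
  have hv0 : 0 ≤ v := hu.trans huv
  have hlogv : Real.log v ≤ 0 := Real.log_nonpos hv0 hv
  rcases eq_or_lt_of_le hu with h0 | h0
  · rw [← h0]
    simp [Real.log_zero]
    nlinarith
  · have hlogu : Real.log u ≤ 0 := Real.log_nonpos hu (huv.trans hv)
    rw [abs_of_nonpos hlogu]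
    have hmono : MonotoneOn (fun x : ℝ => x - x * Real.log x) (Icc u 1) := by
      apply monotoneOn_of_deriv_nonneg (convex_Icc u 1)
        (Continuous.continuousOn (continuous_id.sub Real.continuous_mul_log :
          Continuous fun x : ℝ => x - x * Real.log x))
      · intro x hx
        rw [interior_Icc] at hx
        have hx0 : 0 < x := lt_trans h0 hx.1
        have h1 : HasDerivAt (fun y : ℝ => y * Real.log y) (Real.log x + 1) x := by
          have : HasDerivAt (fun y : ℝ => y * Real.log y) (1 * Real.log x + x * x⁻¹) x :=
            (hasDerivAt_id x).mul (Real.hasDerivAt_log hx0.ne')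
          convert this using 1
          simp [hx0.ne']
        exact ((hasDerivAt_id x).sub h1).differentiableAt.differentiableWithinAt
      · intro x hx
        rw [interior_Icc] at hx
        have hx0 : 0 < x := lt_trans h0 hx.1
        have h1 : HasDerivAt (fun y : ℝ => y * Real.log y) (Real.log x + 1) x := by
          have : HasDerivAt (fun y : ℝ => y * Real.log y) (1 * Real.log x + x * x⁻¹) x :=
            (hasDerivAt_id x).mul (Real.hasDerivAt_log hx0.ne')
          convert this using 1
          simp [hx0.ne']
        have h2 : HasDerivAt (fun y : ℝ => y - y * Real.log y) (1 - (Real.log x + 1)) x :=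
          (hasDerivAt_id x).sub h1
        rw [show (id - fun x : ℝ => x * Real.log x) = (fun y => y - y * Real.log y) from rfl,
          h2.deriv]
        have : Real.log x ≤ 0 := Real.log_nonpos hx0.le hx.2.le
        linarith
    have := hmono (show u ∈ Icc u 1 from ⟨le_refl u, huv.trans hv⟩)
      (show v ∈ Icc u 1 from ⟨huv, hv⟩) huv
    simp only at this
    linarith

/-- Restriction of an admissible trajectory to a shorter time interval. -/
lemma AdmTraj.restrict {N : ℕ} {c : EuclideanSpace ℝ (Fin N) → ℝ → ℝ} {t s : ℝ}
    {X X' : ℝ → EuclideanSpace ℝ (Fin N)} (h : AdmTraj c t X X') (hs0 : 0 ≤ s) (hst : s ≤ t) :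
    AdmTraj c s X X' := by
  obtain ⟨h1, h2, h3⟩ := h
  have h0t : (0:ℝ) ≤ t := hs0.trans hst
  refine ⟨h1.mono_set ?_, fun σ hσ => h2 σ ⟨hσ.1, hσ.2.trans hst⟩, ?_⟩
  · rw [Set.uIcc_of_le hs0, Set.uIcc_of_le h0t]
    exact Icc_subset_Icc le_rfl hst
  · filter_upwards [h3] with σ hσ hσ'
    exact hσ ⟨hσ'.1, hσ'.2.trans hst⟩

set_option maxHeartbeats 2000000 in
/-- Key lemma: if an admissible trajectory `X` (on `[0,t]`) passes at time `s < t` through a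
point which is reachable already at some earlier time `τ < s`, then the endpoint `X t` is
reachable strictly before time `t`. -/
lemma key {N : ℕ} {T A B Cp : ℝ} (hA : 0 < A) (hAB : A ≤ B) (hCp : 0 < Cp)
    {c : EuclideanSpace ℝ (Fin N) → ℝ → ℝ}
    (hV1 : ∀ x, ∀ r ∈ Set.Icc (0:ℝ) T, A ≤ c x r ∧ c x r ≤ B)
    (hV2 : ∀ x y, ∀ r ∈ Set.Icc (0:ℝ) T,
      |c x r - c y r| ≤ Cp * ‖x - y‖ * (1 + |Real.log ‖x - y‖|))
    {K₀ : Set (EuclideanSpace ℝ (Fin N))}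
    {t : ℝ} (ht : t ∈ Set.Icc (0:ℝ) T)
    {X X' : ℝ → EuclideanSpace ℝ (Fin N)} (hadm : AdmTraj c t X X')
    {s τ : ℝ} (hs0 : 0 ≤ s) (hst : s < t) (hτ0 : 0 ≤ τ) (hτs : τ < s)
    (hXs : X s ∈ reach c K₀ τ) :
    ∃ ρ, ρ ∈ Set.Icc (0:ℝ) T ∧ ρ < t ∧ X t ∈ reach c K₀ ρ := by
  classical
  obtain ⟨Y, Y', ⟨hYI, hYint, hYae⟩, hY0, hYτ⟩ := hXs
  have hB : 0 < B := lt_of_lt_of_le hA hAB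
  have h0t : (0:ℝ) ≤ t := hs0.trans hst.le
  set β : ℝ := s - τ with hβdef
  have hβ : 0 < β := by rw [hβdef]; linarith
  set K : ℝ := B * Cp / A with hKdef
  have hK : 0 < K := by rw [hKdef]; positivity
  set ρ₀ : ℝ := A * β with hρ₀def
  have hρ₀ : 0 < ρ₀ := mul_pos hA hβ
  set a : ℝ := max (Real.exp (K*(t-s))) ((1 - Real.log ρ₀) * Real.exp (K*(t-s))) with hadef
  have ha1 : Real.exp (K*(t-s)) ≤ a := le_max_left _ _
  have haone : 1 ≤ a := le_trans (Real.one_le_exp (mul_nonneg hK.le (by linarith))) ha1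
  have ha0 : 0 < a := lt_of_lt_of_le one_pos haone
  set δ : ℝ := Real.exp (1 - a) with hδdef
  have hδpos : 0 < δ := Real.exp_pos _
  set ρ : ℝ := max s (t - δ/(B+1)) with hρdef
  have hsρ : s ≤ ρ := le_max_left _ _
  have hρt : ρ < t := by
    apply max_lt hst
    have : 0 < δ/(B+1) := by positivity
    linarith
  have hρT : ρ ∈ Set.Icc (0:ℝ) T := ⟨hs0.trans hsρ, hρt.le.trans ht.2⟩
  have hρts : ρ ≤ t := hρt.le
  have hBtρ : B*(t-ρ) ≤ δ := by
    have h1 : t - δ/(B+1) ≤ ρ := le_max_right _ _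
    have h2 : t - ρ ≤ δ/(B+1) := by linarith
    have h3 : B*(t-ρ) ≤ B*(δ/(B+1)) := mul_le_mul_of_nonneg_left h2 hB.le
    have h4 : B*(δ/(B+1)) ≤ δ := by
      rw [div_eq_inv_mul]
      rw [show B * ((B+1)⁻¹ * δ) = (B/(B+1)) * δ by field_simp]
      exact mul_le_of_le_one_left hδpos.le
        (div_le_one_of_le₀ (by linarith : B ≤ B + 1) (by positivity : (0:ℝ) ≤ B+1))
    linarith
  set φ : ℝ → ℝ := fun r => a * Real.exp (K*(r-ρ)) with hφdef
  set ψ : ℝ → ℝ := fun r => Real.exp (1 - φ r) with hψdef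
  have hφpos : ∀ r, 0 < φ r := fun r => mul_pos ha0 (Real.exp_pos _)
  have hψpos : ∀ r, 0 < ψ r := fun r => Real.exp_pos _
  have hφ1 : ∀ r ∈ Set.Icc s ρ, 1 ≤ φ r := by
    intro r hr
    calc (1:ℝ) = Real.exp 0 := Real.exp_zero.symm
      _ ≤ Real.exp (K*(t-s) + K*(r-ρ)) := Real.exp_le_exp.2 (by
            rw [show K*(t-s) + K*(r-ρ) = K*((t-ρ)+(r-s)) by ring]
            exact mul_nonneg hK.le (by linarith [hr.1, hr.2, hρts]))
      _ = Real.exp (K*(t-s)) * Real.exp (K*(r-ρ)) := Real.exp_add _ _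
      _ ≤ a * Real.exp (K*(r-ρ)) := mul_le_mul_of_nonneg_right ha1 (Real.exp_pos _).le
  have hψ1 : ∀ r ∈ Set.Icc s ρ, ψ r ≤ 1 := by
    intro r hr
    have h1 := hφ1 r hr
    calc ψ r = Real.exp (1 - φ r) := rfl
      _ ≤ Real.exp 0 := Real.exp_le_exp.2 (by linarith)
      _ = 1 := Real.exp_zero
  have hψρ : ψ ρ = δ := by
    simp only [hψdef, hφdef, hδdef, sub_self, mul_zero, Real.exp_zero, mul_one]
  have hψs : ψ s ≤ ρ₀ := by
    rcases le_or_gt (1 - Real.log ρ₀) 0 with hcase | hcase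
    · have h1 : (1:ℝ) ≤ Real.log ρ₀ := by linarith
      have h4 : Real.exp 1 ≤ Real.exp (Real.log ρ₀) := Real.exp_le_exp.2 h1
      rw [Real.exp_log hρ₀] at h4
      have h5 : (1:ℝ) ≤ Real.exp 1 := Real.one_le_exp (by norm_num)
      exact (hψ1 s ⟨le_refl s, hsρ⟩).trans (by linarith)
    · have ha2 : (1 - Real.log ρ₀) * Real.exp (K*(t-s)) ≤ a := le_max_right _ _
      have hkey : 1 - Real.log ρ₀ ≤ φ s := by
        have h2 : 1 ≤ Real.exp (K*(t-s)+K*(s-ρ)) := by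
          rw [show K*(t-s)+K*(s-ρ) = K*(t-ρ) by ring]
          exact Real.one_le_exp (mul_nonneg hK.le (by linarith))
        calc 1 - Real.log ρ₀ = (1-Real.log ρ₀) * 1 := by ring
          _ ≤ (1-Real.log ρ₀) * Real.exp (K*(t-s)+K*(s-ρ)) :=
              mul_le_mul_of_nonneg_left h2 hcase.le
          _ = ((1-Real.log ρ₀) * Real.exp (K*(t-s))) * Real.exp (K*(s-ρ)) := by
              rw [Real.exp_add]; ring
          _ ≤ a * Real.exp (K*(s-ρ)) := mul_le_mul_of_nonneg_right ha2 (Real.exp_pos _).le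
      calc ψ s = Real.exp (1 - φ s) := rfl
        _ ≤ Real.exp (Real.log ρ₀) := Real.exp_le_exp.2 (by linarith)
        _ = ρ₀ := Real.exp_log hρ₀
  -- continuity
  have hφcont : Continuous φ := by
    rw [hφdef]
    exact continuous_const.mul (Real.continuous_exp.comp
      (continuous_const.mul (continuous_id.sub continuous_const)))
  have hψcont : Continuous ψ := by
    rw [hψdef]
    exact Real.continuous_exp.comp (continuous_const.sub hφcont)
  -- slow-down factor
  set μ : ℝ → ℝ := fun r => min 1 (Cp/A * (ψ r * φ r)) with hμdef
  have hμcont : Continuous μ := continuous_const.min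
    (continuous_const.mul (hψcont.mul hφcont))
  have hμ0 : ∀ r, 0 ≤ μ r := fun r => le_min zero_le_one
    (le_of_lt (mul_pos (div_pos hCp hA) (mul_pos (hψpos r) (hφpos r))))
  have hμ1 : ∀ r, μ r ≤ 1 := fun r => min_le_left _ _
  have hμle : ∀ r, μ r ≤ Cp/A * (ψ r * φ r) := fun r => min_le_right _ _
  -- helper for interval inclusions
  have hsub : ∀ {a₁ b₁ a₂ b₂ : ℝ}, a₁ ≤ a₂ → a₂ ≤ b₂ → b₂ ≤ b₁ →
      Set.uIcc a₂ b₂ ⊆ Set.uIcc a₁ b₁ := by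
    intro a₁ b₁ a₂ b₂ h1 h2 h3
    rw [Set.uIcc_of_le h2, Set.uIcc_of_le (h1.trans (h2.trans h3))]
    exact Icc_subset_Icc h1 h3
  have hXII : IntervalIntegrable X' volume s ρ := hadm.1.mono_set (hsub hs0 hsρ hρts)
  set g : ℝ → EuclideanSpace ℝ (Fin N) := fun r => μ r • X' r with hgdef
  have hgII : IntervalIntegrable g volume s ρ := smul_intervalIntegrable hμcont hsρ hXII
  set e : ℝ → EuclideanSpace ℝ (Fin N) := fun σ => (X t - X ρ) + ∫ r in σ..ρ, g r with hedef
  -- the exact Osgood supersolution identity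
  have hψd : ∀ r : ℝ, HasDerivAt ψ (-(K * (ψ r * φ r))) r := by
    intro r
    have h1 : HasDerivAt (fun y : ℝ => K*(y-ρ)) K r := by
      simpa using ((hasDerivAt_id r).sub_const ρ).const_mul K
    have h2 : HasDerivAt (fun y : ℝ => Real.exp (K*(y-ρ))) (Real.exp (K*(r-ρ)) * K) r := h1.exp
    have h3 : HasDerivAt (fun y : ℝ => 1 - a * Real.exp (K*(y-ρ)))
        (-(a * (Real.exp (K*(r-ρ)) * K))) r := by
      simpa using (h2.const_mul a).const_sub 1
    have h4 := h3.exp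
    rw [hψdef, hφdef]
    convert h4 using 1
    simp only [hφdef]
    ring
  have hFTC : ∀ σ ∈ Set.Icc s ρ, (∫ r in σ..ρ, K * (ψ r * φ r)) = ψ σ - δ := by
    intro σ hσ
    have hcont : Continuous fun r => -(K * (ψ r * φ r)) :=
      (continuous_const.mul (hψcont.mul hφcont)).neg
    have h := intervalIntegral.integral_eq_sub_of_hasDerivAt (f := ψ)
      (f' := fun r => -(K * (ψ r * φ r))) (fun r _ => hψd r) (hcont.intervalIntegrable σ ρ)
    rw [intervalIntegral.integral_neg, hψρ] at h
    linarith only [h]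
  -- a.e. facts about X'
  have hXae := hadm.2.2
  have hXB : ∀ᵐ r ∂volume, r ∈ Set.Icc (0:ℝ) t → ‖X' r‖ ≤ B := by
    filter_upwards [hXae] with r h hr
    exact (h hr).trans (hV1 (X r) r ⟨hr.1, hr.2.trans ht.2⟩).2
  have hXint := hadm.2.1
  have hXdiff : ∀ σ₁ ∈ Set.Icc (0:ℝ) t, ∀ σ₂ ∈ Set.Icc (0:ℝ) t,
      X σ₂ - X σ₁ = ∫ r in σ₁..σ₂, X' r := by
    intro σ₁ h1 σ₂ h2
    have e1 : IntervalIntegrable X' volume 0 σ₁ := hadm.1.mono_set (hsub le_rfl h1.1 h1.2)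
    have e2 : IntervalIntegrable X' volume 0 σ₂ := hadm.1.mono_set (hsub le_rfl h2.1 h2.2)
    have hadd := intervalIntegral.integral_add_adjacent_intervals e1 (e1.symm.trans e2)
    rw [hXint σ₁ h1, hXint σ₂ h2, ← hadd]
    abel
  have hXIIρt : IntervalIntegrable X' volume ρ t := hadm.1.mono_set (hsub hρT.1 hρts le_rfl)
  have heδ' : ‖X t - X ρ‖ ≤ δ := by
    rw [hXdiff ρ ⟨hρT.1, hρts⟩ t ⟨h0t, le_refl t⟩]
    have h1 : ‖∫ r in ρ..t, X' r‖ ≤ ∫ r in ρ..t, ‖X' r‖ :=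
      intervalIntegral.norm_integral_le_integral_norm hρts
    have h2 : (∫ r in ρ..t, ‖X' r‖) ≤ ∫ r in ρ..t, B := by
      apply intervalIntegral.integral_mono_ae_restrict hρts hXIIρt.norm intervalIntegrable_const
      rw [Filter.EventuallyLE, ae_restrict_iff' measurableSet_Icc]
      filter_upwards [hXB] with r h hr
      exact h ⟨hρT.1.trans hr.1, hr.2⟩
    have h3 : (∫ r in ρ..t, (B:ℝ)) = B * (t - ρ) := by
      rw [intervalIntegral.integral_const, smul_eq_mul]; ring
    rw [h3] at h2
    linarith only [h1, h2, hBtρ]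
  -- bound on the correction term e
  have hebound : ∀ σ ∈ Set.Icc s ρ, ‖e σ‖ ≤ ψ σ := by
    intro σ hσ
    have hgIIσ : IntervalIntegrable g volume σ ρ := hgII.mono_set (hsub hσ.1 hσ.2 le_rfl)
    have h1 : ‖e σ‖ ≤ ‖X t - X ρ‖ + ‖∫ r in σ..ρ, g r‖ := norm_add_le _ _
    have h2 : ‖∫ r in σ..ρ, g r‖ ≤ ∫ r in σ..ρ, ‖g r‖ :=
      intervalIntegral.norm_integral_le_integral_norm hσ.2
    have h3 : (∫ r in σ..ρ, ‖g r‖) ≤ ∫ r in σ..ρ, K * (ψ r * φ r) := by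
      apply intervalIntegral.integral_mono_ae_restrict hσ.2 hgIIσ.norm
        ((continuous_const.mul (hψcont.mul hφcont) :
          Continuous fun r => K * (ψ r * φ r)).intervalIntegrable σ ρ)
      rw [Filter.EventuallyLE, ae_restrict_iff' measurableSet_Icc]
      filter_upwards [hXB] with r h hr
      have hr0t : r ∈ Set.Icc (0:ℝ) t := ⟨hs0.trans (hσ.1.trans hr.1), hr.2.trans hρts⟩
      have hXrB : ‖X' r‖ ≤ B := h hr0t
      have hgr : ‖g r‖ = μ r * ‖X' r‖ := by
        simp only [hgdef]
        rw [norm_smul, Real.norm_eq_abs, abs_of_nonneg (hμ0 r)]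
      rw [hgr]
      calc μ r * ‖X' r‖ ≤ (Cp/A*(ψ r*φ r)) * B :=
            mul_le_mul (hμle r) hXrB (norm_nonneg _)
              (le_of_lt (mul_pos (div_pos hCp hA) (mul_pos (hψpos r) (hφpos r))))
        _ = K * (ψ r * φ r) := by rw [hKdef]; field_simp
    rw [hFTC σ hσ] at h3
    linarith only [h1, h2, h3, heδ']
  -- the connecting straight segment
  set v₀ : EuclideanSpace ℝ (Fin N) := β⁻¹ • e s with hv₀def
  have hv₀A : ‖v₀‖ ≤ A := by
    rw [hv₀def, norm_smul, Real.norm_eq_abs, abs_of_nonneg (inv_nonneg.2 hβ.le)]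
    have h1 : ‖e s‖ ≤ ρ₀ := (hebound s ⟨le_refl s, hsρ⟩).trans hψs
    rw [hρ₀def] at h1
    calc β⁻¹ * ‖e s‖ ≤ β⁻¹ * (A * β) := mul_le_mul_of_nonneg_left h1 (inv_nonneg.2 hβ.le)
      _ = A := by field_simp
  -- the chasing trajectory
  set Z' : ℝ → EuclideanSpace ℝ (Fin N) :=
    fun r => if r ≤ τ then Y' r else if r ≤ s then v₀ else (1 - μ r) • X' r with hZ'def
  set Z : ℝ → EuclideanSpace ℝ (Fin N) := fun σ => Y 0 + ∫ r in (0:ℝ)..σ, Z' r with hZdef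
  have hZ'I1 : IntervalIntegrable Z' volume 0 τ := by
    rw [intervalIntegrable_iff_integrableOn_Ioc_of_le hτ0]
    refine ((intervalIntegrable_iff_integrableOn_Ioc_of_le hτ0).1 hYI).congr_fun ?_
      measurableSet_Ioc
    intro r hr
    simp only [hZ'def]
    rw [if_pos hr.2]
  have hZ'I2 : IntervalIntegrable Z' volume τ s := by
    rw [intervalIntegrable_iff_integrableOn_Ioc_of_le hτs.le]
    refine ((intervalIntegrable_iff_integrableOn_Ioc_of_le hτs.le).1
      (intervalIntegrable_const (c := v₀))).congr_fun ?_ measurableSet_Ioc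
    intro r hr
    simp only [hZ'def]
    rw [if_neg (not_le.2 hr.1), if_pos hr.2]
  have hZ'I3 : IntervalIntegrable Z' volume s ρ := by
    have hsmul : IntervalIntegrable (fun r => (1 - μ r) • X' r) volume s ρ :=
      smul_intervalIntegrable (continuous_const.sub hμcont) hsρ hXII
    rw [intervalIntegrable_iff_integrableOn_Ioc_of_le hsρ] at hsmul ⊢
    refine hsmul.congr_fun ?_ measurableSet_Ioc
    intro r hr
    simp only [hZ'def]
    rw [if_neg (not_le.2 (hτs.trans hr.1)), if_neg (not_le.2 hr.1)]
  have hZ'I : IntervalIntegrable Z' volume 0 ρ := (hZ'I1.trans hZ'I2).trans hZ'I3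
  -- identification of the pieces of Z
  have hI1 : ∀ σ ∈ Set.Icc (0:ℝ) τ, Z σ = Y σ := by
    intro σ hσ
    have hcongr : ∫ r in (0:ℝ)..σ, Z' r = ∫ r in (0:ℝ)..σ, Y' r := by
      rw [intervalIntegral.integral_of_le hσ.1, intervalIntegral.integral_of_le hσ.1]
      refine setIntegral_congr_fun measurableSet_Ioc ?_
      intro r hr
      simp only [hZ'def]
      rw [if_pos (hr.2.trans hσ.2)]
    simp only [hZdef]
    rw [hcongr]
    exact (hYint σ hσ).symm
  have hI2 : ∀ σ ∈ Set.Icc τ s, Z σ = X s + (σ - τ) • v₀ := by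
    intro σ hσ
    have hIIτσ : IntervalIntegrable Z' volume τ σ := hZ'I2.mono_set (hsub le_rfl hσ.1 hσ.2)
    have hadd := intervalIntegral.integral_add_adjacent_intervals hZ'I1 hIIτσ
    have hfirst : Y 0 + ∫ r in (0:ℝ)..τ, Z' r = Y τ := by
      have := hI1 τ ⟨hτ0, le_refl τ⟩
      simp only [hZdef] at this
      exact this
    have hsecond : ∫ r in τ..σ, Z' r = (σ - τ) • v₀ := by
      have hcongr : ∫ r in τ..σ, Z' r = ∫ r in τ..σ, (fun _ => v₀) r := by
        rw [intervalIntegral.integral_of_le hσ.1, intervalIntegral.integral_of_le hσ.1]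
        refine setIntegral_congr_fun measurableSet_Ioc ?_
        intro r hr
        simp only [hZ'def]
        rw [if_neg (not_le.2 hr.1), if_pos (hr.2.trans hσ.2)]
      rw [hcongr, intervalIntegral.integral_const]
    simp only [hZdef]
    rw [← hadd, hsecond, ← hYτ, ← add_assoc, hfirst]
  have hI3 : ∀ σ ∈ Set.Icc s ρ, Z σ = X σ + e σ := by
    intro σ hσ
    have hZ'I0s : IntervalIntegrable Z' volume 0 s := hZ'I1.trans hZ'I2
    have hZ'Isσ : IntervalIntegrable Z' volume s σ := hZ'I3.mono_set (hsub le_rfl hσ.1 hσ.2)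
    have hadd := intervalIntegral.integral_add_adjacent_intervals hZ'I0s hZ'Isσ
    have hZs : Y 0 + ∫ r in (0:ℝ)..s, Z' r = X s + e s := by
      have h := hI2 s ⟨hτs.le, le_refl s⟩
      simp only [hZdef] at h
      rw [h]
      congr 1
      rw [hv₀def, smul_smul, hβdef, mul_inv_cancel₀ (show s - τ ≠ 0 by
        rw [← hβdef]; exact hβ.ne'), one_smul]
    have hXIIsσ : IntervalIntegrable X' volume s σ := hXII.mono_set (hsub le_rfl hσ.1 hσ.2)
    have hgIIsσ : IntervalIntegrable g volume s σ := hgII.mono_set (hsub le_rfl hσ.1 hσ.2)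
    have h5 : ∫ r in s..σ, Z' r = (∫ r in s..σ, X' r) - ∫ r in s..σ, g r := by
      rw [← intervalIntegral.integral_sub hXIIsσ hgIIsσ]
      rw [intervalIntegral.integral_of_le hσ.1, intervalIntegral.integral_of_le hσ.1]
      refine setIntegral_congr_fun measurableSet_Ioc ?_
      intro r hr
      simp only [hZ'def, hgdef]
      rw [if_neg (not_le.2 (hτs.trans hr.1)), if_neg (not_le.2 hr.1), sub_smul, one_smul]
    have h6 : (∫ r in s..σ, X' r) = X σ - X s :=
      (hXdiff s ⟨hs0, hst.le⟩ σ ⟨hs0.trans hσ.1, hσ.2.trans hρts⟩).symm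
    have h7 := intervalIntegral.integral_add_adjacent_intervals hgIIsσ
      (hgII.mono_set (hsub hσ.1 hσ.2 le_rfl))
    have h8 : e σ = e s - ∫ r in s..σ, g r := by
      simp only [hedef]
      rw [← h7]
      abel
    simp only [hZdef]
    rw [← hadd, ← add_assoc, hZs, h5, h6, h8]
    abel
  have hZρ : Z ρ = X t := by
    rw [hI3 ρ ⟨hsρ, le_refl ρ⟩]
    simp only [hedef]
    rw [intervalIntegral.integral_same]
    abel
  -- a.e. admissibility of Z
  have hneτ : ∀ᵐ r : ℝ ∂volume, r ≠ τ := by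
    rw [ae_iff]
    simp only [not_not, setOf_eq_eq_singleton]
    exact measure_singleton τ
  have hnes : ∀ᵐ r : ℝ ∂volume, r ≠ s := by
    rw [ae_iff]
    simp only [not_not, setOf_eq_eq_singleton]
    exact measure_singleton s
  have hZae : ∀ᵐ r ∂volume, r ∈ Set.Icc (0:ℝ) ρ → ‖Z' r‖ ≤ c (Z r) r := by
    filter_upwards [hYae, hXae, hXB, hneτ, hnes] with r hYr hXr hXBr hrτ hrs hr
    have hrT : r ∈ Set.Icc (0:ℝ) T := ⟨hr.1, hr.2.trans hρT.2⟩
    by_cases h1 : r ≤ τ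
    · have hrτ' : r ∈ Set.Icc (0:ℝ) τ := ⟨hr.1, h1⟩
      simp only [hZ'def]
      rw [if_pos h1, hI1 r hrτ']
      exact hYr hrτ'
    · push_neg at h1
      by_cases h2 : r ≤ s
      · simp only [hZ'def]
        rw [if_neg (not_le.2 h1), if_pos h2]
        exact hv₀A.trans (hV1 (Z r) r hrT).1
      · push_neg at h2
        have hrsρ : r ∈ Set.Icc s ρ := ⟨h2.le, hr.2⟩
        have hZr : Z r = X r + e r := hI3 r hrsρ
        simp only [hZ'def]
        rw [if_neg (not_le.2 h1), if_neg (not_le.2 h2)]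
        have hr0t : r ∈ Set.Icc (0:ℝ) t := ⟨hr.1, hr.2.trans hρts⟩
        have hn : ‖X' r‖ ≤ c (X r) r := hXr hr0t
        have hμr0 := hμ0 r
        have hμr1 := hμ1 r
        have hnorm : ‖(1 - μ r) • X' r‖ = (1 - μ r) * ‖X' r‖ := by
          rw [norm_smul, Real.norm_eq_abs, abs_of_nonneg (by linarith only [hμr1])]
        rw [hnorm]
        have hcZA : A ≤ c (Z r) r := (hV1 (Z r) r hrT).1
        rcases le_or_gt 1 (Cp/A * (ψ r * φ r)) with hbig | hsmall
        · have hμeq1 : μ r = 1 := min_eq_left hbig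
          rw [hμeq1, sub_self, zero_mul]
          linarith only [hA, hcZA]
        · have hμeq : μ r = Cp/A * (ψ r * φ r) := min_eq_right hsmall.le
          rcases le_or_gt (‖X' r‖) (c (Z r) r) with hcase | hcase
          · have hq : 0 ≤ μ r * ‖X' r‖ := mul_nonneg hμr0 (norm_nonneg (X' r))
            linarith only [hq, hcase]
          · have hu : ‖e r‖ ≤ ψ r := hebound r hrsρ
            have hveq : X r - Z r = -(e r) := by rw [hZr]; abel
            have hV2r := hV2 (X r) (Z r) r hrT
            have h2' : c (X r) r - c (Z r) r ≤
                Cp * ‖X r - Z r‖ * (1 + |Real.log ‖X r - Z r‖|) := (le_abs_self _).trans hV2r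
            rw [hveq, norm_neg] at h2'
            have hmono2 : ‖e r‖ * (1 + |Real.log ‖e r‖|) ≤ ψ r * (1 - Real.log (ψ r)) :=
              omega_mono_s3 (norm_nonneg _) hu (hψ1 r hrsρ)
            have hlogψ : 1 - Real.log (ψ r) = φ r := by
              simp only [hψdef]
              rw [Real.log_exp]
              ring
            rw [hlogψ] at hmono2
            have hμA : μ r * A = Cp * (ψ r * φ r) := by
              rw [hμeq]; field_simp
            have hAn : A ≤ ‖X' r‖ := hcZA.trans hcase.le
            have e1 : μ r * A ≤ μ r * ‖X' r‖ := mul_le_mul_of_nonneg_left hAn hμr0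
            have e3 : c (X r) r - c (Z r) r ≤ Cp * (ψ r * φ r) := by
              calc c (X r) r - c (Z r) r
                  ≤ Cp * ‖e r‖ * (1 + |Real.log ‖e r‖|) := h2'
                _ = Cp * (‖e r‖ * (1 + |Real.log ‖e r‖|)) := by ring
                _ ≤ Cp * (ψ r * φ r) := mul_le_mul_of_nonneg_left hmono2 hCp.le
            linarith only [e1, e3, hμA, hn]
  refine ⟨ρ, hρT, hρt, Z, Z', ⟨hZ'I, ?_, hZae⟩, ?_, hZρ⟩
  · intro σ hσ
    simp only [hZdef]
    rw [intervalIntegral.integral_same, add_zero]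
  · simp only [hZdef]
    rw [intervalIntegral.integral_same, add_zero]
    exact hY0

/-- along an extremal trajectory the minimal time function grows linearly:
`z(x̄(s)) = s` for every `s ∈ [0,t]`. -/
theorem stmt3 (N : ℕ) (T A B Cp : ℝ) (hT : 0 < T) (hA : 0 < A) (hAB : A ≤ B) (hCp : 0 < Cp)
    (c : EuclideanSpace ℝ (Fin N) → ℝ → ℝ)
    (hmeas : Measurable fun q : EuclideanSpace ℝ (Fin N) × ℝ => c q.1 q.2)
    (hV1 : ∀ x, ∀ t ∈ Set.Icc (0 : ℝ) T, A ≤ c x t ∧ c x t ≤ B)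
    (hV2 : ∀ x y, ∀ t ∈ Set.Icc (0 : ℝ) T,
      |c x t - c y t| ≤ Cp * ‖x - y‖ * (1 + |Real.log ‖x - y‖|))
    (K₀ : Set (EuclideanSpace ℝ (Fin N))) (hK₀ : IsCompact K₀)
    (t : ℝ) (ht : t ∈ Set.Icc (0 : ℝ) T)
    (X X' : ℝ → EuclideanSpace ℝ (Fin N))
    (hadm : AdmTraj c t X X') (hinit : X 0 ∈ K₀)
    (hext : minTime c K₀ T (X t) = t) :
    ∀ s ∈ Set.Icc (0 : ℝ) t, minTime c K₀ T (X s) = s := by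
  intro s hs
  have hbddS : ∀ x : EuclideanSpace ℝ (Fin N),
      BddBelow {t' | t' ∈ Set.Icc (0:ℝ) T ∧ x ∈ reach c K₀ t'} :=
    fun x => ⟨0, fun r hr => hr.1.1⟩
  have hmem : s ∈ {t' | t' ∈ Set.Icc (0:ℝ) T ∧ X s ∈ reach c K₀ t'} :=
    ⟨⟨hs.1, hs.2.trans ht.2⟩, ⟨X, X', hadm.restrict hs.1 hs.2, hinit, rfl⟩⟩
  have hle : minTime c K₀ T (X s) ≤ s := csInf_le (hbddS _) hmem
  refine le_antisymm hle (le_of_not_gt ?_)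
  intro hlt
  have hlt' : sInf {t' | t' ∈ Set.Icc (0:ℝ) T ∧ X s ∈ reach c K₀ t'} < s := hlt
  obtain ⟨τ, hτmem, hτlt⟩ := exists_lt_of_csInf_lt ⟨s, hmem⟩ hlt'
  rcases eq_or_lt_of_le hs.2 with heq | hstlt
  · rw [heq] at hτmem hτlt
    have h := csInf_le (hbddS (X t)) hτmem
    rw [show sInf {t' | t' ∈ Set.Icc (0:ℝ) T ∧ X t ∈ reach c K₀ t'} =
      minTime c K₀ T (X t) from rfl, hext] at h
    linarith
  · obtain ⟨ρ, hρT, hρlt, hρmem⟩ :=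
      key hA hAB hCp hV1 hV2 ht hadm hs.1 hstlt hτmem.1.1 hτlt hτmem.2
    have h := csInf_le (hbddS (X t)) (⟨hρT, hρmem⟩ :
      ρ ∈ {t' | t' ∈ Set.Icc (0:ℝ) T ∧ X t ∈ reach c K₀ t'})
    rw [show sInf {t' | t' ∈ Set.Icc (0:ℝ) T ∧ X t ∈ reach c K₀ t'} =
      minTime c K₀ T (X t) from rfl, hext] at h
    linarith
end
end
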